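/- arXiv:2108.10141 — 7 statements merged into one kernel-verified Lean document; each statement's English description precedes it below -/
import Mathlib

section
/- Let G* be a DAG with vertices ordered by a causal order O. For any vertex X and any Y in prefix(X, O), Y is d-connected to X given prefix(X, O) \ {Y} if and only if Y is a parent of X in G*. -/
namespace BOSS

variable {V : Type*}

/-- `a` is an ancestor of / equal to `b` (descendant relation, reflexive-transitive). -/
def desc (E : V → V → Prop) : V → V → Prop := Relation.ReflTransGen E

/-- The interior vertex at index `i` of the walk `p` is a collider. -/
def colliderAt [Inhabited V] (E : V → V → Prop) (p : List V) (i : ℕ) : Prop :=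
  E (p.getD (i - 1) default) (p.getD i default) ∧ E (p.getD (i + 1) default) (p.getD i default)

/-- `p` is a path from `x` to `y` that is active (d-connecting) given conditioning set `Z`:
every interior collider has a descendant in `Z` and every interior non-collider is outside `Z`. -/
def activePath [Inhabited V] (E : V → V → Prop) (Z : Set V) (p : List V) (x y : V) : Prop :=
  2 ≤ p.length ∧ p.head? = some x ∧ p.getLast? = some y ∧ p.Nodup ∧
  p.Chain' (fun a b => E a b ∨ E b a) ∧
  ∀ i, 0 < i → i + 1 < p.length →
    (colliderAt E p i → ∃ d ∈ Z, desc E (p.getD i default) d) ∧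
    (¬ colliderAt E p i → p.getD i default ∉ Z)

/-- `x` and `y` are d-connected given `Z` in the graph with edge relation `E`. -/
def dConn [Inhabited V] (E : V → V → Prop) (x y : V) (Z : Set V) : Prop :=
  ∃ p, activePath E Z p x y

/-- d-separation. -/
def dSep [Inhabited V] (E : V → V → Prop) (x y : V) (Z : Set V) : Prop :=
  ¬ dConn E x y Z

/-- the set of vertices strictly preceding `x` in the permutation (list) `O`. -/
def prefixSet [DecidableEq V] (O : List V) (x : V) : Set V :=
  {y | y ∈ O ∧ O.idxOf y < O.idxOf x}

/-- `O` is a permutation of all the vertices. -/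
def isPermOf [Fintype V] (O : List V) : Prop := O.Nodup ∧ ∀ v : V, v ∈ O

/-- `O` is a causal (topological) order of the DAG with edges `E`. -/
def isCausalOrder [Fintype V] [DecidableEq V] (E : V → V → Prop) (O : List V) : Prop :=
  isPermOf O ∧ ∀ x y, E x y → O.idxOf x < O.idxOf y

/-- Verma–Pearl construction: `y` is a parent of `x` in `dag(O)` iff `y` precedes `x` in `O`
and `x` depends on `y` given `prefix(x, O) \ {y}` (relative to dependence oracle `dep`). -/
def vpParent [DecidableEq V] (dep : V → V → Set V → Prop) (O : List V) (y x : V) : Prop :=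
  y ∈ prefixSet O x ∧ dep x y (prefixSet O x \ {y})

/-- The number of edges of the Verma–Pearl DAG built from permutation `O`. -/
noncomputable def vpEdgeCount [DecidableEq V] (dep : V → V → Set V → Prop) (O : List V) : ℕ :=
  Set.ncard {p : V × V | vpParent dep O p.1 p.2}

/-- acyclicity of an edge relation. -/
def acyclic (E : V → V → Prop) : Prop := ∀ x, ¬ Relation.TransGen E x x

/-- number of edges of a graph given by edge relation `E`. -/
noncomputable def edgeCount (E : V → V → Prop) : ℕ := Set.ncard {p : V × V | E p.1 p.2}

end BOSS


open BOSS in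
lemma desc_indexOf_le' {V : Type*} [Fintype V] [DecidableEq V]
    (E : V → V → Prop) (O : List V) (hO : isCausalOrder E O)
    {a b : V} (h : desc E a b) : O.idxOf a ≤ O.idxOf b := by
  induction h with
  | refl => exact le_refl _
  | tail _ hE ih => exact ih.trans (hO.2 _ _ hE).le

open BOSS in
/-- along a causal order, `y` in the prefix of `x` is d-connected to `x`
given the rest of the prefix iff `y` is a parent of `x`. -/
theorem dconn_prefix_iff_parent
    {V : Type*} [Fintype V] [DecidableEq V] [Inhabited V]
    (E : V → V → Prop) (hacyc : acyclic E)
    (O : List V) (hO : isCausalOrder E O)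
    (x y : V) (hy : y ∈ prefixSet O x) :
    dConn E y x (prefixSet O x \ {y}) ↔ E y x := by
  obtain ⟨⟨hOnd, hOall⟩, hOord⟩ := hO
  have hOc : isCausalOrder E O := ⟨⟨hOnd, hOall⟩, hOord⟩
  obtain ⟨hyO, hyx⟩ := hy
  constructor
  · rintro ⟨p, hlen, hhead, hlast, hnodup, hchain, hint⟩
    set n := p.length with hn
    set f : ℕ → ℕ := fun i => O.idxOf (p.getD i default) with hf
    have hp0 : p.getD 0 default = y := by
      have h0 : 0 < n := by omega
      rw [List.getD_eq_getElem _ _ h0]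
      have := List.head?_eq_getElem? (l := p)
      rw [hhead, List.getElem?_eq_getElem h0] at this
      exact (Option.some_inj.mp this).symm
    have hpl : p.getD (n-1) default = x := by
      have h0 : n - 1 < n := by omega
      rw [List.getD_eq_getElem _ _ h0]
      have := List.getLast?_eq_getElem? (l := p)
      rw [hlast, List.getElem?_eq_getElem h0] at this
      exact (Option.some_inj.mp this).symm
    have hchain' : ∀ i, i + 1 < n →
        E (p.getD i default) (p.getD (i+1) default) ∨
        E (p.getD (i+1) default) (p.getD i default) := by
      intro i hi
      have h1 : i < n := by omega
      rw [List.getD_eq_getElem _ _ h1, List.getD_eq_getElem _ _ hi]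
      have := List.isChain_iff_getElem.mp hchain i (by omega)
      simpa using this
    have hne : ∀ i j, i < n → j < n → i ≠ j →
        p.getD i default ≠ p.getD j default := by
      intro i j hi hj hij
      rw [List.getD_eq_getElem _ _ hi, List.getD_eq_getElem _ _ hj]
      intro h
      exact hij ((List.Nodup.getElem_inj_iff hnodup).mp h)
    have hcol : ∀ i, 0 < i → i + 1 < n → colliderAt E p i → f i < O.idxOf x := by
      intro i h1 h2 hc
      obtain ⟨hc1, _⟩ := hint i h1 h2
      obtain ⟨d, hd, hdesc⟩ := hc1 hc
      obtain ⟨⟨hdO, hdx⟩, _⟩ := hd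
      exact lt_of_le_of_lt (desc_indexOf_le' E O hOc hdesc) hdx
    have hnoncol : ∀ i, 0 < i → i + 1 < n → ¬ colliderAt E p i → O.idxOf x < f i := by
      intro i h1 h2 hc
      obtain ⟨_, hnz⟩ := hint i h1 h2
      have hnZ := hnz hc
      have hiy : p.getD i default ≠ y := by
        rw [← hp0]; exact hne i 0 (by omega) (by omega) (by omega)
      have hix : p.getD i default ≠ x := by
        rw [← hpl]; exact hne i (n-1) (by omega) (by omega) (by omega)
      have hiO : p.getD i default ∈ O := hOall _
      have h3 : ¬ (O.idxOf (p.getD i default) < O.idxOf x) := by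
        intro hlt
        exact hnZ ⟨⟨hiO, hlt⟩, hiy⟩
      have h4 : O.idxOf (p.getD i default) ≠ O.idxOf x := by
        intro heq
        exact hix ((List.idxOf_inj hiO).mp heq)
      show O.idxOf x < O.idxOf (p.getD i default)
      omega
    by_cases h2 : n = 2
    · have := hchain' 0 (by omega)
      rw [hp0] at this
      have : E y (p.getD 1 default) ∨ E (p.getD 1 default) y := this
      have h1 : p.getD 1 default = x := by rw [← hpl]; congr 1; omega
      rw [h1] at this
      rcases this with h | h
      · exact h
      · exact absurd (hOord _ _ h) (by omega)
    · exfalso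
      have hn3 : 3 ≤ n := by omega
      by_cases hex : ∃ j, 0 < j ∧ j + 1 < n ∧ ¬ colliderAt E p j
      · obtain ⟨j, hj1, hj2, hjnc⟩ := hex
        have hfj : O.idxOf x < f j := hnoncol j hj1 hj2 hjnc
        obtain ⟨i, hi, hmax⟩ := Finset.exists_max_image (Finset.range n) f
          ⟨0, Finset.mem_range.mpr (by omega)⟩
        rw [Finset.mem_range] at hi
        have hji : f j ≤ f i := hmax j (Finset.mem_range.mpr (by omega))
        have hi0 : i ≠ 0 := by
          intro h; rw [h] at hji hmax
          have : f 0 = O.idxOf y := by show O.idxOf (p.getD 0 default) = _; rw [hp0]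
          omega
        have hil : i ≠ n - 1 := by
          intro h; rw [h] at hji
          have : f (n-1) = O.idxOf x := by show O.idxOf (p.getD (n-1) default) = _; rw [hpl]
          omega
        have hi1 : 0 < i := by omega
        have hi2 : i + 1 < n := by omega
        have hinc : ¬ colliderAt E p i := by
          intro hc
          have := hcol i hi1 hi2 hc
          omega
        have e1 : E (p.getD (i-1) default) (p.getD i default) := by
          have := hchain' (i-1) (by omega)
          have heq : i - 1 + 1 = i := by omega
          rw [heq] at this
          rcases this with h | h
          · exact h
          · have := hOord _ _ h
            have := hmax (i-1) (Finset.mem_range.mpr (by omega))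
            simp only [hf] at *
            omega
        have e2 : E (p.getD (i+1) default) (p.getD i default) := by
          rcases hchain' i hi2 with h | h
          · have := hOord _ _ h
            have := hmax (i+1) (Finset.mem_range.mpr (by omega))
            simp only [hf] at *
            omega
          · exact h
        exact hinc ⟨e1, e2⟩
      · push_neg at hex
        have hc := hex (n-2) (by omega) (by omega)
        have := hcol (n-2) (by omega) (by omega) hc
        obtain ⟨_, he⟩ := hc
        have heq : n - 2 + 1 = n - 1 := by omega
        rw [heq, hpl] at he
        have := hOord _ _ he
        simp only [hf] at *
        omega
  · intro hE
    refine ⟨[y, x], by simp, rfl, rfl, ?_, ?_, ?_⟩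
    · have hne : y ≠ x := by
        intro h; rw [h] at hyx; omega
      simp [hne]
    · exact List.isChain_pair.mpr (Or.inl hE)
    · intro i h1 h2
      simp at h2
      omega
end

section
/- If O is a causal order (topological order) of DAG G*, then the DAG built by the Verma–Pearl construction from O using the d-separation oracle of G* equals G* itself. -/
open BOSS

private lemma rtg_index {V : Type*} [DecidableEq V] {E : V → V → Prop} {O : List V}
    (hE : ∀ x y, E x y → O.idxOf x < O.idxOf y) {a b : V}
    (h : Relation.ReflTransGen E a b) : O.idxOf a ≤ O.idxOf b := by
  induction h with
  | refl => exact le_rfl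
  | tail _ hbc ih => exact le_of_lt (lt_of_le_of_lt ih (hE _ _ hbc))

open BOSS in
/-- the Verma–Pearl construction from a causal order, with the
d-separation oracle of `G*`, recovers `G*` exactly. -/
theorem vp_causal_order_recovers_graph
    {V : Type*} [Fintype V] [DecidableEq V] [Inhabited V]
    (E : V → V → Prop) (hacyc : acyclic E)
    (O : List V) (hO : isCausalOrder E O) :
    ∀ y x, vpParent (dConn E) O y x ↔ E y x := by
  obtain ⟨⟨hnd, hmem⟩, hord⟩ := hO
  intro y x
  constructor
  · rintro ⟨⟨-, hyx⟩, p, hlen, hhead, hlast, hpnd, hchain, hint⟩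
    by_contra hne
    set Z : Set V := prefixSet O x \ {y} with hZ
    set v : ℕ → V := fun i => p.getD i default with hv
    have hgetD : ∀ {i : ℕ} (h : i < p.length), v i = p.get ⟨i, h⟩ := fun h =>
      List.getD_eq_get p default ⟨_, h⟩
    have hv0 : v 0 = x := by
      cases p with
      | nil => simp at hhead
      | cons a t => simp_all [hv]
    have hvlast : v (p.length - 1) = y := by
      have h1 : p.length - 1 < p.length := by omega
      have := List.getLast?_eq_getElem? (l := p)
      rw [hlast, List.getElem?_eq_getElem h1] at this
      rw [hgetD h1]
      simpa using this.symm
    have hchain' : ∀ i, i + 1 < p.length → E (v i) (v (i+1)) ∨ E (v (i+1)) (v i) := by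
      intro i hi
      have := List.isChain_iff_getElem.mp hchain i hi
      rw [hgetD (i := i) (by omega), hgetD hi]
      simpa using this
    have hZsub : ∀ d ∈ Z, O.idxOf d < O.idxOf x := by
      rintro d ⟨⟨-, hd⟩, -⟩; exact hd
    -- case split on length and first edge direction
    rcases Nat.lt_or_ge 2 p.length with hlen3 | hlen2
    · -- length ≥ 3
      rcases hchain' 0 (by omega) with h01 | h10
      · -- x → v 1 : find the first reversed edge
        by_cases hdir : ∀ j, j + 1 < p.length → E (v j) (v (j+1))
        · -- fully directed path x → … → y
          have hall : ∀ j, j < p.length → Relation.ReflTransGen E x (v j) := by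
            intro j
            induction j with
            | zero => intro _; rw [hv0]
            | succ k ih =>
              intro hk
              exact (ih (by omega)).tail (hdir k hk)
          have := rtg_index hord (hvlast ▸ hall (p.length - 1) (by omega))
          omega
        · push_neg at hdir
          have hS : ∃ i, i + 1 < p.length ∧ ¬ E (v i) (v (i+1)) := hdir
          classical
          let i := Nat.find hS
          obtain ⟨hilt, hinot⟩ : i + 1 < p.length ∧ ¬ E (v i) (v (i+1)) := Nat.find_spec hS
          have hmin : ∀ j, j < i → j + 1 < p.length → E (v j) (v (j+1)) := by
            intro j hj hj'
            by_contra hc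
            have : i ≤ j := Nat.find_le (⟨hj', hc⟩ : j + 1 < p.length ∧ ¬ E (v j) (v (j+1)))
            omega
          have hipos : 0 < i := by
            rcases Nat.eq_zero_or_pos i with h0 | h
            · rw [h0] at hinot; exact absurd h01 hinot
            · exact h
          have hback : E (v (i+1)) (v i) := (hchain' i hilt).resolve_left hinot
          have hfwd : E (v (i-1)) (v i) := by
            have := hmin (i-1) (by omega) (by omega)
            rwa [show i - 1 + 1 = i by omega] at this
          have hcoll : colliderAt E p i := ⟨hfwd, hback⟩
          obtain ⟨d, hdZ, hdesc⟩ := (hint i hipos hilt).1 hcoll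
          -- x ⟶* v i
          have hanc : ∀ j, j ≤ i → Relation.ReflTransGen E x (v j) := by
            intro j
            induction j with
            | zero => intro _; rw [hv0]
            | succ k ih =>
              intro hk
              exact (ih (by omega)).tail (hmin k (by omega) (by omega))
          have h1 : Relation.ReflTransGen E x d := (hanc i le_rfl).trans hdesc
          have := rtg_index hord h1
          have := hZsub d hdZ
          omega
      · -- v 1 → x : v 1 is an interior non-collider lying in Z, contradiction
        have h10' : E (v 1) x := by rw [← hv0]; exact h10
        have hncoll : ¬ colliderAt E p 1 := by
          rintro ⟨hc1, -⟩
          have hx1 : E x (v 1) := by rw [← hv0]; exact hc1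
          exact hacyc x ((Relation.TransGen.single hx1).tail h10')
        have hv1Z : v 1 ∈ Z := by
          have hv1x : O.idxOf (v 1) < O.idxOf x := hord _ _ h10'
          have hv1y : v 1 ≠ y := by
            rw [← hvlast]
            intro h
            have h1 : (1 : ℕ) < p.length := by omega
            have h2 : p.length - 1 < p.length := by omega
            rw [hgetD h1, hgetD h2] at h
            have := (List.Nodup.get_inj_iff hpnd).mp h
            have : (1 : ℕ) = p.length - 1 := congrArg Fin.val this
            omega
          exact ⟨⟨hmem _, hv1x⟩, hv1y⟩
        exact (hint 1 one_pos (by omega)).2 hncoll hv1Z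
    · -- length = 2 : p = [x, y]
      have hlen2' : p.length = 2 := le_antisymm hlen2 hlen
      have hv1 : v 1 = y := by rw [← hvlast, hlen2']
      rcases hchain' 0 (by omega) with h | h
      · rw [hv0, hv1] at h
        have := hord _ _ h
        omega
      · rw [hv0, hv1] at h; exact hne h
  · intro hE
    have hlt : O.idxOf y < O.idxOf x := hord _ _ hE
    have hxy : x ≠ y := fun h => by rw [h] at hlt; omega
    refine ⟨⟨hmem y, hlt⟩, [x, y], ?_, ?_, ?_, ?_, ?_, ?_⟩
    · simp
    · simp
    · simp
    · simp [hxy]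
    · exact List.isChain_pair.mpr (Or.inr hE)
    · intro i hi hi'
      simp at hi'
      omega
end

section
/- Let S be a finite set of variables containing X, and suppose conditional independence in P satisfies the compositional graphoid axioms. Then the Markov blanket mb(X, S) — a minimal subset M of S \ {X} such that every Y ∈ S \ (M ∪ {X}) satisfies Y ⊥ X | M — is unique. -/
/-- A minimal Markov blanket of `X` within `S`: a minimal `M ⊆ S \ {X}` such that
`X ⟂ S \ (M ∪ {X}) | M`. -/
def IsMarkovBlanket {V : Type*} (indep : Set V → Set V → Set V → Prop)
    (X : V) (S M : Set V) : Prop :=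
  M ⊆ S \ {X} ∧ indep {X} (S \ (M ∪ {X})) M ∧
    ∀ M' ⊆ S \ {X}, indep {X} (S \ (M' ∪ {X})) M' → ¬ M' ⊂ M

/-- under the compositional graphoid axioms (symmetry, decomposition, weak
union, contraction, intersection, composition), the Markov blanket of `X` in a finite
variable set `S` is unique. -/
theorem markov_blanket_unique
    {V : Type*} [Fintype V]
    (indep : Set V → Set V → Set V → Prop)
    (symm : ∀ A B Z : Set V, indep A B Z → indep B A Z)
    (decomp : ∀ A B C Z : Set V, indep A (B ∪ C) Z → indep A B Z)
    (weakUnion : ∀ A B C Z : Set V, indep A (B ∪ C) Z → indep A B (Z ∪ C))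
    (contraction : ∀ A B C Z : Set V, indep A B (Z ∪ C) → indep A C Z → indep A (B ∪ C) Z)
    (intersection : ∀ A B C Z : Set V, indep A B (Z ∪ C) → indep A C (Z ∪ B) → indep A (B ∪ C) Z)
    (composition : ∀ A B C Z : Set V, indep A B Z → indep A C Z → indep A (B ∪ C) Z)
    (X : V) (S : Set V) (hX : X ∈ S)
    (M M' : Set V)
    (hM : IsMarkovBlanket indep X S M) (hM' : IsMarkovBlanket indep X S M') :
    M = M' := by
  obtain ⟨hMsub, hMind, hMmin⟩ := hM
  obtain ⟨hM'sub, hM'ind, hM'min⟩ := hM'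
  set I := M ∩ M' with hI
  set W := M \ M' with hW
  set W' := M' \ M with hW'
  set R0 := S \ (M ∪ M' ∪ {X}) with hR0
  have hMS : ∀ y ∈ M, y ∈ S ∧ y ≠ X := by
    intro y hy; have := hMsub hy; simpa [Set.mem_diff] using this
  have hM'S : ∀ y ∈ M', y ∈ S ∧ y ≠ X := by
    intro y hy; have := hM'sub hy; simpa [Set.mem_diff] using this
  have e1 : S \ (M ∪ {X}) = W' ∪ R0 := by
    ext y
    simp only [hW', hR0, Set.mem_diff, Set.mem_union, Set.mem_singleton_iff]
    constructor
    · rintro ⟨hyS, hy⟩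
      push_neg at hy
      by_cases h : y ∈ M' <;> tauto
    · rintro (⟨h1, h2⟩ | ⟨h1, h2⟩)
      · obtain ⟨hs, hx⟩ := hM'S y h1; tauto
      · push_neg at h2; tauto
  have e2 : S \ (M' ∪ {X}) = W ∪ R0 := by
    ext y
    simp only [hW, hR0, Set.mem_diff, Set.mem_union, Set.mem_singleton_iff]
    constructor
    · rintro ⟨hyS, hy⟩
      push_neg at hy
      by_cases h : y ∈ M <;> tauto
    · rintro (⟨h1, h2⟩ | ⟨h1, h2⟩)
      · obtain ⟨hs, hx⟩ := hMS y h1; tauto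
      · push_neg at h2; tauto
  have eM : M = I ∪ W := by
    ext y; simp only [hI, hW, Set.mem_union, Set.mem_inter_iff, Set.mem_diff]; tauto
  have eM' : M' = I ∪ W' := by
    ext y; simp only [hI, hW', Set.mem_union, Set.mem_inter_iff, Set.mem_diff]; tauto
  have e5 : S \ (I ∪ {X}) = R0 ∪ (W ∪ W') := by
    ext y
    simp only [hI, hW, hW', hR0, Set.mem_diff, Set.mem_union, Set.mem_inter_iff,
      Set.mem_singleton_iff]
    constructor
    · rintro ⟨hyS, hy⟩
      push_neg at hy
      by_cases h1 : y ∈ M <;> by_cases h2 : y ∈ M' <;> tauto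
    · rintro (⟨h1, h2⟩ | ⟨h1, h2⟩ | ⟨h1, h2⟩)
      · push_neg at h2; tauto
      · obtain ⟨hs, hx⟩ := hMS y h1; tauto
      · obtain ⟨hs, hx⟩ := hM'S y h1; tauto
  -- main chain
  have h1 : indep {X} (W' ∪ R0) (I ∪ W) := by rw [← e1, ← eM]; exact hMind
  have h2 : indep {X} (W ∪ R0) (I ∪ W') := by rw [← e2, ← eM']; exact hM'ind
  have hXW' : indep {X} W' (I ∪ W) := decomp _ _ _ _ h1
  have hXW : indep {X} W (I ∪ W') := decomp _ _ _ _ h2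
  have hWW' : indep {X} (W ∪ W') I := intersection _ _ _ _ hXW hXW'
  have h1' : indep {X} (R0 ∪ W') (I ∪ W) := by rwa [Set.union_comm R0 W']
  have hR0ind : indep {X} R0 (I ∪ (W ∪ W')) := by
    have := weakUnion _ _ _ _ h1'
    rwa [Set.union_assoc] at this
  have hfinal : indep {X} (R0 ∪ (W ∪ W')) I := contraction _ _ _ _ hR0ind hWW'
  have hIind : indep {X} (S \ (I ∪ {X})) I := by rwa [e5]
  have hIsubM : I ⊆ M := Set.inter_subset_left
  have hIsubM' : I ⊆ M' := Set.inter_subset_right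
  have hIsub : I ⊆ S \ {X} := hIsubM.trans hMsub
  have hIM : I = M := by
    by_contra h
    exact hMmin I hIsub hIind ⟨hIsubM, fun hc => h (le_antisymm hIsubM hc)⟩
  have hIM' : I = M' := by
    by_contra h
    exact hM'min I hIsub hIind ⟨hIsubM', fun hc => h (le_antisymm hIsubM' hc)⟩
  rw [← hIM, hIM']
end

section
/- If the model (G*, P) satisfies the SMR assumption and permutation O minimizes the edge count of the Verma–Pearl DAG dag(O) over all permutations, then dag(O) belongs to the Markov equivalence class M(G*) of G*. (Correctness of the SP algorithm, Raskutti–Uhler.) -/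
namespace SPAux
open BOSS Relation List

variable {V : Type*}

lemma acyclic_not_both {E : V → V → Prop} (h : BOSS.acyclic E) {a b : V} (hab : E a b) :
    ¬ E b a := fun hba => h a (TransGen.head hab (TransGen.single hba))

lemma acyclic_ne {E : V → V → Prop} (h : BOSS.acyclic E) {a b : V} (hab : E a b) : a ≠ b := by
  rintro rfl; exact h a (TransGen.single hab)

lemma desc_le_idx [Fintype V] [DecidableEq V] {E : V → V → Prop} {O : List V}
    (hO : isCausalOrder E O) {a b : V} (h : desc E a b) :
    O.idxOf a ≤ O.idxOf b := by
  induction h with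
  | refl => exact le_refl _
  | tail _ h2 ih => exact ih.trans (le_of_lt (hO.2 _ _ h2))

/-- key path lemma: in a causal order, a d-connecting path from `x` to a
predecessor `y` given `prefix(x) \ {y}` forces the edge `y → x`. -/
lemma path_forces_edge [Fintype V] [DecidableEq V] [Inhabited V]
    {E : V → V → Prop} (hacyc : BOSS.acyclic E) {O : List V} (hO : isCausalOrder E O)
    {x y : V} (hy : y ∈ prefixSet O x)
    (hconn : dConn E x y (prefixSet O x \ {y})) : E y x := by
  obtain ⟨p, hlen, hhead, hlast, hnodup, hchain, hint⟩ := hconn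
  set Z := prefixSet O x \ {y} with hZ
  set n := p.length with hn
  have hn2 : 2 ≤ n := hlen
  have hnpos : 0 < n := lt_of_lt_of_le (by norm_num) hn2
  have hne : p ≠ [] := by
    intro h; rw [h] at hn; simp [hn] at hnpos
  -- getD-vs-get facts
  have hget : ∀ i (h : i < n), p.getD i default = p.get ⟨i, h⟩ := fun i h =>
    List.getD_eq_get _ _ ⟨i, h⟩
  have h0 : p.getD 0 default = x := by
    cases p with
    | nil => simp at hhead
    | cons a l => simp only [List.head?] at hhead; simp [Option.some_inj.mp hhead]
  have hlasty : p.getD (n - 1) default = y := by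
    rw [List.getLast?_eq_getLast_of_ne_nil hne] at hlast
    have := Option.some_inj.mp hlast
    rw [hget (n - 1) (Nat.sub_lt hnpos (by norm_num))]
    rw [← this, List.getLast_eq_getElem, List.get_eq_getElem]
  have hchain' : ∀ i, i + 1 < n →
      E (p.getD i default) (p.getD (i+1) default) ∨
      E (p.getD (i+1) default) (p.getD i default) := by
    intro i hi
    have := List.isChain_iff_getElem.mp hchain i (by omega)
    rw [hget i (by omega), hget (i+1) hi]
    exact this
  have hinj : ∀ i j (hi : i < n) (hj : j < n),
      p.getD i default = p.getD j default → i = j := by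
    intro i j hi hj hEq
    rw [hget i hi, hget j hj] at hEq
    exact congrArg Fin.val (hnodup.get_inj_iff.mp hEq)
  have hidxy : O.idxOf y < O.idxOf x := hy.2
  by_contra hyx
  -- inductive claim
  have claim : ∀ i, i + 1 < n →
      E (p.getD i default) (p.getD (i+1) default) ∧
      O.idxOf x ≤ O.idxOf (p.getD i default) := by
    intro i
    induction i with
    | zero =>
      intro h1
      rw [h0]
      refine ⟨?_, le_refl _⟩
      rcases hchain' 0 h1 with h | h
      · rwa [h0] at h
      · rw [h0] at h
        -- edge p[1] → x
        exfalso
        by_cases hend : n = 2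
        · -- then p[1] = y
          have : p.getD 1 default = y := by rw [← hlasty]; congr 1; omega
          rw [this] at h; exact hyx h
        · have h1n : 1 + 1 < n := by omega
          have hnc : ¬ colliderAt E p 1 := by
            rintro ⟨hc1, -⟩
            simp only [Nat.sub_self] at hc1
            rw [h0] at hc1
            exact acyclic_not_both hacyc h hc1
          have hnotZ := (hint 1 (by norm_num) h1n).2 hnc
          apply hnotZ
          have hmem : p.getD 1 default ∈ O := hO.1.2 _
          have hlt : O.idxOf (p.getD 1 default) < O.idxOf x := hO.2 _ _ h
          refine ⟨⟨hmem, hlt⟩, ?_⟩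
          -- p[1] ≠ y since y is at position n-1 ≠ 1
          simp only [Set.mem_singleton_iff]
          intro hEq
          rw [← hlasty] at hEq
          have := hinj 1 (n-1) (by omega) (by omega) hEq
          omega
    | succ i ih =>
      intro h2
      have hi1 : i + 1 < n := by omega
      obtain ⟨hE, hle⟩ := ih hi1
      have hlt : O.idxOf x < O.idxOf (p.getD (i+1) default) :=
        lt_of_le_of_lt hle (hO.2 _ _ hE)
      refine ⟨?_, le_of_lt hlt⟩
      rcases hchain' (i+1) h2 with h | h
      · exact h
      · exfalso
        have hcol : colliderAt E p (i+1) := by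
          constructor
          · simpa using hE
          · exact h
        obtain ⟨d, hdZ, hdesc⟩ := (hint (i+1) (by omega) h2).1 hcol
        have h1 : O.idxOf (p.getD (i+1) default) ≤ O.idxOf d := desc_le_idx hO hdesc
        have h2' : O.idxOf d < O.idxOf x := hdZ.1.2
        omega
  -- conclude contradiction
  have hfin : n - 2 + 1 < n := by omega
  obtain ⟨hE, hle⟩ := claim (n - 2) hfin
  have : p.getD (n - 2 + 1) default = y := by rw [← hlasty]; congr 1; omega
  rw [this] at hE
  have := hO.2 _ _ hE
  omega

lemma exists_causal_order [Fintype V] [DecidableEq V]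
    {E : V → V → Prop} (hacyc : BOSS.acyclic E) : ∃ O : List V, isCausalOrder E O := by
  classical
  haveI : IsRefl V (Relation.ReflTransGen E) := ⟨fun _ => Relation.ReflTransGen.refl⟩
  haveI : IsTrans V (Relation.ReflTransGen E) := ⟨fun _ _ _ hab hbc => hab.trans hbc⟩
  haveI : IsAntisymm V (Relation.ReflTransGen E) := by
    constructor
    intro a b hab hba
    rcases (Relation.reflTransGen_iff_eq_or_transGen.mp hab) with rfl | h1
    · rfl
    rcases (Relation.reflTransGen_iff_eq_or_transGen.mp hba) with rfl | h2
    · rfl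
    exact absurd (h1.trans h2) (hacyc a)
  haveI : IsPreorder V (Relation.ReflTransGen E) := {}
  haveI : IsPartialOrder V (Relation.ReflTransGen E) := {}
  obtain ⟨s, hs, hsub⟩ := extend_partialOrder (Relation.ReflTransGen E)
  haveI := hs
  haveI : IsTotal V s := ⟨hs.total⟩
  haveI : IsTrans V s := ⟨fun a b c => hs.trans a b c⟩
  haveI : DecidableRel s := Classical.decRel s
  set L := List.insertionSort s (Finset.univ.toList : List V) with hL
  have hperm : L ~ Finset.univ.toList := List.perm_insertionSort s _
  have hsorted : L.Pairwise s := List.pairwise_insertionSort s _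
  have hnodup : L.Nodup := hperm.nodup_iff.mpr Finset.univ.nodup_toList
  have hmem : ∀ v : V, v ∈ L := fun v => hperm.mem_iff.mpr (Finset.mem_toList.mpr (Finset.mem_univ v))
  refine ⟨L, ⟨hnodup, hmem⟩, ?_⟩
  intro a b hab
  have hne : a ≠ b := acyclic_ne hacyc hab
  have hsab : s a b := hsub _ _ (Relation.ReflTransGen.single hab)
  by_contra hcon
  push_neg at hcon
  have hia : L.idxOf a < L.length := List.idxOf_lt_length_iff.mpr (hmem a)
  have hib : L.idxOf b < L.length := List.idxOf_lt_length_iff.mpr (hmem b)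
  have hne2 : L.idxOf a ≠ L.idxOf b := fun h =>
    hne ((List.idxOf_inj (hmem a)).mp h)
  have hlt : L.idxOf b < L.idxOf a := by omega
  have hsba : s b a := by
    have := hsorted.rel_get_of_lt (a := ⟨L.idxOf b, hib⟩) (b := ⟨L.idxOf a, hia⟩) hlt
    rwa [List.idxOf_get, List.idxOf_get] at this
  exact hne (hs.antisymm _ _ hsab hsba)

end SPAux

open BOSS in
/-- correctness of the SP algorithm, Raskutti–Uhler: under the SMR assumption,
any permutation minimizing the Verma–Pearl edge count yields a DAG in the Markov equivalence
class of `G*`. `indep` is the conditional-independence oracle of `P`; the dependence oracle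
used by the Verma–Pearl construction is its negation. -/
theorem sp_correct_under_smr
    {V : Type*} [Fintype V] [DecidableEq V] [Inhabited V]
    (E : V → V → Prop) (hacyc : acyclic E)
    (indep : V → V → Set V → Prop)
    -- the Markov assumption for (G*, P)
    (hmarkov : ∀ x y : V, ∀ Z : Set V, dSep E x y Z → indep x y Z)
    -- SMR: any Markov DAG outside the MEC of G* has strictly more edges than G*
    (hsmr : ∀ E' : V → V → Prop, acyclic E' →
      (∀ x y : V, ∀ Z : Set V, dSep E' x y Z → indep x y Z) →
      ¬ (∀ x y : V, ∀ Z : Set V, dSep E x y Z ↔ dSep E' x y Z) →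
      edgeCount E < edgeCount E')
    -- standard fact (Verma–Pearl): every permutation DAG is Markov to P
    (hvp : ∀ O' : List V, isPermOf O' →
      ∀ x y : V, ∀ Z : Set V, dSep (vpParent (fun a b W => ¬ indep a b W) O') x y Z →
        indep x y Z)
    (O : List V) (hO : isPermOf O)
    (hmin : ∀ O' : List V, isPermOf O' →
      vpEdgeCount (fun a b W => ¬ indep a b W) O ≤ vpEdgeCount (fun a b W => ¬ indep a b W) O') :
    ∀ x y : V, ∀ Z : Set V,
      dSep E x y Z ↔ dSep (vpParent (fun a b W => ¬ indep a b W) O) x y Z := by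
  classical
  by_contra hcon
  set dep : V → V → Set V → Prop := fun a b W => ¬ indep a b W with hdep
  have hacyc' : acyclic (vpParent dep O) := by
    intro v hv
    have mono : ∀ a b : V, Relation.TransGen (vpParent dep O) a b →
        O.idxOf a < O.idxOf b := by
      intro a b h
      induction h with
      | single h => exact h.1.2
      | tail _ h ih => exact ih.trans h.1.2
    exact lt_irrefl _ (mono v v hv)
  have hlt := hsmr (vpParent dep O) hacyc' (hvp O hO) hcon
  obtain ⟨O', hO'⟩ := SPAux.exists_causal_order hacyc
  have hsub : {p : V × V | vpParent dep O' p.1 p.2} ⊆ {p : V × V | E p.1 p.2} := by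
    rintro ⟨a, b⟩ ⟨hpre, hdepab⟩
    have hconn : dConn E b a (prefixSet O' b \ {a}) := by
      by_contra h
      exact hdepab (hmarkov _ _ _ h)
    exact SPAux.path_forces_edge hacyc hO' hpre hconn
  have hle1 : vpEdgeCount dep O' ≤ edgeCount E :=
    Set.ncard_le_ncard hsub (Set.toFinite _)
  have hle2 := hmin O' hO'.1
  have heq : edgeCount (vpParent dep O) = vpEdgeCount dep O := rfl
  omega
end

section
/- Under faithfulness, for any permutation O of the vertices of G*, the Verma–Pearl DAG dag(O) contains every edge of the skeleton of G*: if X and Y are adjacent in G*, then X and Y are adjacent in dag(O). -/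
open BOSS in
/-- under faithfulness, the Verma–Pearl DAG from any permutation contains the
skeleton of `G*`: vertices adjacent in `G*` are adjacent in `dag(O)`. -/
theorem vp_dag_contains_skeleton
    {V : Type*} [Fintype V] [DecidableEq V] [Inhabited V]
    (E : V → V → Prop) (hacyc : acyclic E)
    (indep : V → V → Set V → Prop)
    (hfaith : ∀ x y : V, ∀ Z : Set V, indep x y Z ↔ dSep E x y Z)
    (O : List V) (hO : isPermOf O) :
    ∀ x y, (E x y ∨ E y x) →
      (vpParent (fun a b W => ¬ indep a b W) O x y ∨
        vpParent (fun a b W => ¬ indep a b W) O y x) := by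
  intro x y hxy
  have hne : x ≠ y := by
    rintro rfl
    exact hacyc x (Relation.TransGen.single (hxy.elim id id))
  have hconn : ∀ a b : V, (E a b ∨ E b a) → a ≠ b → ∀ Z : Set V, dConn E a b Z := by
    intro a b hab hne Z
    refine ⟨[a, b], ?_, ?_, ?_, ?_, ?_, ?_⟩
    · simp
    · simp
    · simp
    · simp [hne]
    · exact List.isChain_pair.mpr hab
    · intro i hi hlt
      simp only [List.length_cons, List.length_nil] at hlt
      exact absurd hi (by omega)
  have hidx : O.idxOf x ≠ O.idxOf y := fun h =>
    hne ((List.idxOf_inj (hO.2 x)).mp h)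
  rcases hidx.lt_or_gt with h | h
  · exact Or.inl ⟨⟨hO.2 x, h⟩,
      fun hind => (hfaith y x _).mp hind (hconn y x hxy.symm hne.symm _)⟩
  · exact Or.inr ⟨⟨hO.2 y, h⟩,
      fun hind => (hfaith x y _).mp hind (hconn x y hxy hne _)⟩
end

section
/- Under faithfulness, for every permutation O, the edge count of the Verma–Pearl DAG dag(O) is at least |edges(G*)|, with equality if and only if dag(O) is Markov equivalent to G*. -/
namespace VPX
variable {V : Type*}
open List








/-- symmetrized edge -/
def sym (G : V → V → Prop) (a b : V) : Prop := G a b ∨ G b a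

lemma sym_comm {G : V → V → Prop} {a b : V} : sym G a b ↔ sym G b a := or_comm

/-- condition on an interior triple of a walk -/
def cond (G : V → V → Prop) (Z : Set V) (a c b : V) : Prop :=
  (G a c ∧ G b c → ∃ d ∈ Z, Relation.ReflTransGen G c d) ∧ (¬ (G a c ∧ G b c) → c ∉ Z)

/-- active walk -/
def Act (G : V → V → Prop) (Z : Set V) (p : List V) : Prop :=
  p.Chain' (sym G) ∧ ∀ a c b : V, [a, c, b] <:+: p → cond G Z a c b

lemma cond_rev {G : V → V → Prop} {Z : Set V} {a c b : V} (h : cond G Z a c b) :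
    cond G Z b c a := by
  constructor
  · rintro ⟨h1, h2⟩; exact h.1 ⟨h2, h1⟩
  · intro h1; exact h.2 (fun hh => h1 ⟨hh.2, hh.1⟩)

lemma noSelf {G : V → V → Prop} (hG : ∀ x, ¬ Relation.TransGen G x x) (a : V) : ¬ G a a :=
  fun h => hG a (Relation.TransGen.single h)

lemma asymm {G : V → V → Prop} (hG : ∀ x, ¬ Relation.TransGen G x x) {a b : V}
    (h : G a b) : ¬ G b a :=
  fun h' => hG a (Relation.TransGen.head h (Relation.TransGen.single h'))

lemma Act.infix {G : V → V → Prop} {Z : Set V} {p q : List V}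
    (h : Act G Z p) (hq : q <:+: p) : Act G Z q :=
  ⟨h.1.infix hq, fun a c b htri => h.2 a c b (htri.trans hq)⟩

lemma Act.reverse {G : V → V → Prop} {Z : Set V} {p : List V}
    (h : Act G Z p) : Act G Z p.reverse := by
  constructor
  · rw [List.Chain', List.isChain_reverse]
    exact h.1.imp (fun a b hab => hab.symm)
  · intro a c b htri
    have : [b, c, a] <:+: p := by
      rw [← List.reverse_infix]
      simpa using htri
    exact cond_rev (h.2 b c a this)

/-- key decomposition of a length-3 infix of an append -/
lemma infix_triple_append {a c b : V} {l r : List V} (h : [a, c, b] <:+: l ++ r) :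
    [a, c, b] <:+: l ∨ [a, c, b] <:+: r ∨
      (∃ l' r', l = l' ++ [a, c] ∧ r = b :: r') ∨
      (∃ l' r', l = l' ++ [a] ∧ r = c :: b :: r') := by
  induction l with
  | nil => right; left; simpa using h
  | cons x l0 ih =>
    rw [List.cons_append, List.infix_cons_iff] at h
    rcases h with h | h
    · -- prefix case
      match l0, h with
      | [], h =>
        obtain ⟨t, ht⟩ := h
        simp only [List.cons_append, List.nil_append] at ht
        injection ht with h1 ht
        right; right; right
        exact ⟨[], t, by simp [h1], by rw [← ht]⟩
      | [y], h =>
        obtain ⟨t, ht⟩ := h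
        simp only [List.cons_append, List.nil_append, List.singleton_append] at ht
        injection ht with h1 ht; injection ht with h2 ht
        right; right; left
        exact ⟨[], t, by simp [h1, h2], by rw [← ht]⟩
      | y :: z :: l0', h =>
        left
        have hpre : [a, c, b] <+: x :: y :: z :: l0' := by
          have h' : [a,c,b] <+: (x :: y :: z :: l0') ++ r := by simpa using h
          exact List.prefix_of_prefix_length_le h' (by simp) (by simp)
        exact hpre.isInfix
    · rcases ih h with h' | h' | ⟨l', r', rfl, hr⟩ | ⟨l', r', rfl, hr⟩
      · exact Or.inl (h'.trans (List.infix_cons_iff.mpr (Or.inr List.infix_rfl)))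
      · exact Or.inr (Or.inl h')
      · right; right; left; exact ⟨x :: l', r', by simp, hr⟩
      · right; right; right; exact ⟨x :: l', r', by simp, hr⟩


def Conn (G : V → V → Prop) (Z : Set V) (x y : V) : Prop :=
  ∃ p, Act G Z p ∧ p.head? = some x ∧ p.getLast? = some y ∧ 2 ≤ p.length

lemma edges_of_triple {G : V → V → Prop} {Z : Set V} {p : List V} (h : Act G Z p)
    {a c b : V} (htri : [a, c, b] <:+: p) : sym G a c ∧ sym G c b := by
  have := h.1.infix htri
  rw [List.isChain_cons_cons, List.isChain_pair] at this
  exact this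

lemma length_two_of_ends {p : List V} {x y : V} (hx : p.head? = some x)
    (hy : p.getLast? = some y) (hxy : x ≠ y) : 2 ≤ p.length := by
  match p, hx with
  | [a], hx =>
    simp at hx hy
    exact absurd (hx.symm.trans hy) hxy
  | a :: b :: t, _ => simp

lemma exists_three_of_length {l : List V} (h : 3 ≤ l.length) :
    ∃ a c b r, l = a :: c :: b :: r := by
  match l, h with
  | a :: c :: b :: r, _ => exact ⟨a, c, b, r, rfl⟩

section bridge
variable [Inhabited V] {E : V → V → Prop} {Z : Set V}

lemma act_of_activePath {p : List V} {x y : V} (h : BOSS.activePath E Z p x y) :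
    Act E Z p := by
  obtain ⟨hlen, hx, hy, hnd, hch, hint⟩ := h
  refine ⟨hch, ?_⟩
  rintro a c b ⟨s, t, rfl⟩
  set k := s.length with hk
  have e1 : (s ++ [a, c, b] ++ t).getD k default = a := by
    rw [List.append_assoc, List.getD_append_right _ _ _ _ (le_refl _)]
    simp
  have e2 : (s ++ [a, c, b] ++ t).getD (k + 1) default = c := by
    rw [List.append_assoc, List.getD_append_right _ _ _ _ (by omega)]
    simp [hk, Nat.add_sub_cancel_left]
  have e3 : (s ++ [a, c, b] ++ t).getD (k + 2) default = b := by
    rw [List.append_assoc, List.getD_append_right _ _ _ _ (by omega)]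
    have : k + 2 - k = 2 := by omega
    rw [this]
    simp
  have hlt : k + 1 + 1 < (s ++ [a, c, b] ++ t).length := by
    simp [List.length_append]; omega
  have hcol : BOSS.colliderAt E (s ++ [a, c, b] ++ t) (k + 1) ↔ (E a c ∧ E b c) := by
    unfold BOSS.colliderAt
    have : k + 1 - 1 = k := by omega
    rw [this, e1, e2]
    have : k + 1 + 1 = k + 2 := by omega
    rw [this, e3]
  have H := hint (k + 1) (by omega) hlt
  constructor
  · intro hc
    have := H.1 (hcol.mpr hc)
    rw [e2] at this
    exact this
  · intro hc
    have := H.2 (fun hx => hc (hcol.mp hx))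
    rw [e2] at this
    exact this

lemma activePath_of_act {p : List V} {x y : V} (ha : Act E Z p) (hx : p.head? = some x)
    (hy : p.getLast? = some y) (hnd : p.Nodup) (hlen : 2 ≤ p.length) :
    BOSS.activePath E Z p x y := by
  refine ⟨hlen, hx, hy, hnd, ha.1, ?_⟩
  intro i hi hi1
  have h3 : 3 ≤ (p.drop (i - 1)).length := by
    rw [List.length_drop]; omega
  obtain ⟨a, c, b, r, hd⟩ := exists_three_of_length h3
  have hp : p = p.take (i - 1) ++ ([a, c, b] ++ r) := by
    conv_lhs => rw [← List.take_append_drop (i - 1) p]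
    rw [hd]; rfl
  have hkl : (p.take (i - 1)).length = i - 1 := by
    rw [List.length_take]; omega
  have e0 : p.getD (i - 1) default = a := by
    conv_lhs => rw [hp]
    rw [List.getD_append_right _ _ _ _ (by omega)]
    simp [hkl]
  have e1 : p.getD i default = c := by
    conv_lhs => rw [hp]
    rw [List.getD_append_right _ _ _ _ (by omega)]
    have : i - (p.take (i-1)).length = 1 := by omega
    rw [this]; simp
  have e2 : p.getD (i + 1) default = b := by
    conv_lhs => rw [hp]
    rw [List.getD_append_right _ _ _ _ (by omega)]
    have : i + 1 - (p.take (i-1)).length = 2 := by omega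
    rw [this]; simp
  have htri : [a, c, b] <:+: p := ⟨p.take (i-1), r, by rw [List.append_assoc, ← hp]⟩
  have hc := ha.2 a c b htri
  have hcol : BOSS.colliderAt E p i ↔ (E a c ∧ E b c) := by
    unfold BOSS.colliderAt
    rw [e0, e1, e2]
  constructor
  · intro h; rw [e1]; exact hc.1 (hcol.mp h)
  · intro h; rw [e1]; exact hc.2 (fun hh => h (hcol.mpr hh))

end bridge






lemma dup_decomp {l : List V} (h : ¬ l.Nodup) :
    ∃ (xs : List V) (a : V) (ys zs : List V), l = xs ++ a :: (ys ++ a :: zs) := by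
  induction l with
  | nil => simp at h
  | cons x t ih =>
    by_cases hx : x ∈ t
    · obtain ⟨ys, zs, rfl⟩ := List.append_of_mem hx
      exact ⟨[], x, ys, zs, by simp⟩
    · have : ¬ t.Nodup := fun hnd => h (List.nodup_cons.mpr ⟨hx, hnd⟩)
      obtain ⟨xs, a, ys, zs, rfl⟩ := ih this
      exact ⟨x :: xs, a, ys, zs, by simp⟩

lemma escape {G : V → V → Prop} {Z : Set V} (hG : ∀ x, ¬ Relation.TransGen G x x) :
    ∀ (t : List V) (a b c2 u : V) (t0 : List V), Act G Z (a :: b :: t) → G a b →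
      a :: b :: t = t0 ++ [c2, u] → G u c2 → ∃ d ∈ Z, Relation.ReflTransGen G a d := by
  intro t
  induction t with
  | nil =>
    intro a b c2 u t0 _ hab heq huc
    have ht0 : t0 = [] := by
      cases t0 with
      | nil => rfl
      | cons z t1 =>
        exfalso
        have hl := congrArg List.length heq
        rw [List.length_append] at hl
        simp only [List.length_cons, List.length_nil] at hl
        omega
    subst ht0
    rw [List.nil_append] at heq
    obtain ⟨h1, h2⟩ := List.cons_eq_cons.mp heq
    obtain ⟨h3, -⟩ := List.cons_eq_cons.mp h2
    subst h1 h3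
    exact absurd hab (asymm hG huc)
  | cons c t' ih =>
    intro a b c2 u t0 hact hab heq huc
    by_cases hcb : G c b
    · have htri : [a, b, c] <:+: a :: b :: c :: t' := ⟨[], t', rfl⟩
      obtain ⟨d, hd, hdesc⟩ := (hact.2 a b c htri).1 ⟨hab, hcb⟩
      exact ⟨d, hd, Relation.ReflTransGen.head hab hdesc⟩
    · have hbc : G b c := by
        have := edges_of_triple hact (⟨[], t', rfl⟩ : [a,b,c] <:+: a :: b :: c :: t')
        rcases this.2 with h | h
        · exact h
        · exact absurd h hcb
      have htail : Act G Z (b :: c :: t') := hact.infix ⟨[a], [], by simp⟩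
      obtain ⟨t0', ht0'⟩ : ∃ t0', b :: c :: t' = t0' ++ [c2, u] := by
        match t0, heq with
        | [], heq => simp at heq
        | x :: t0', heq =>
          refine ⟨t0', ?_⟩
          have := (List.cons.inj heq).2
          simpa using this
      obtain ⟨d, hd, hdesc⟩ := ih b c c2 u t0' htail hbc ht0' huc
      exact ⟨d, hd, Relation.ReflTransGen.head hab hdesc⟩

lemma splice {G : V → V → Prop} {Z : Set V} (hG : ∀ x, ¬ Relation.TransGen G x x)
    {p : List V} {x y : V} (ha : Act G Z p) (hx : p.head? = some x)
    (hy : p.getLast? = some y) (hnd : ¬ p.Nodup) :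
    ∃ q, Act G Z q ∧ q.head? = some x ∧ q.getLast? = some y ∧ q.length < p.length := by
  obtain ⟨xs, u, ys, zs, rfl⟩ := dup_decomp hnd
  have hys : ys ≠ [] := by
    rintro rfl
    have htri : [u, u] <:+: xs ++ u :: ([] ++ u :: zs) := ⟨xs, zs, by simp⟩
    have := ha.1.infix htri
    rw [List.isChain_pair] at this
    rcases this with h | h <;> exact noSelf hG u h
  obtain ⟨c1, ys1, rfl⟩ : ∃ c1 ys1, ys = c1 :: ys1 := by
    match ys, hys with
    | c1 :: ys1, _ => exact ⟨c1, ys1, rfl⟩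
  obtain ⟨ys2, c2, hys2⟩ : ∃ ys2 c2, (c1 :: ys1 : List V) = ys2 ++ [c2] := by
    rcases List.eq_nil_or_concat (c1 :: ys1) with h | ⟨L, b, h⟩
    · simp at h
    · exact ⟨L, b, by simpa using h⟩
  refine ⟨xs ++ u :: zs, ⟨?_, ?_⟩, ?_, ?_, ?_⟩
  · -- chain'
    have hc := ha.1
    rw [List.Chain', List.isChain_append] at hc ⊢
    refine ⟨hc.1, ?_, hc.2.2⟩
    have := hc.2.1
    have h2 : List.Chain' (sym G) ((u :: (c1 :: ys1)) ++ (u :: zs)) := by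
      simpa [List.Chain'] using this
    rw [List.Chain', List.isChain_append] at h2
    exact h2.2.1
  · -- triples
    intro a c b htri
    rcases infix_triple_append htri with h | h | ⟨l', r', hl, hr⟩ | ⟨l', r', hl, hr⟩
    · exact ha.2 a c b (h.trans ⟨[], u :: ((c1::ys1) ++ u :: zs), by simp⟩)
    · exact ha.2 a c b (h.trans ⟨xs ++ u :: (c1 :: ys1), [], by simp⟩)
    · -- tri = [a, c, u] with xs = l' ++ [a,c]
      obtain ⟨hb, -⟩ := List.cons_eq_cons.mp hr
      subst hb hl
      exact ha.2 a c u ⟨l', (c1::ys1) ++ u :: zs, by simp⟩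
    · -- junction triple [a, u, b]  (c = u, zs = b :: r')
      obtain ⟨hc, hzs⟩ := List.cons_eq_cons.mp hr
      subst hc hl hzs
      -- cond1 at [a, u, c1]
      have htri1 : [a, u, c1] <:+: l' ++ [a] ++ u :: ((c1::ys1) ++ u :: (b :: r')) :=
        ⟨l', ys1 ++ u :: (b :: r'), by simp⟩
      have cond1 := ha.2 a u c1 htri1
      -- cond2 at [c2, u, b]
      have htri2 : [c2, u, b] <:+: l' ++ [a] ++ u :: ((c1::ys1) ++ u :: (b :: r')) := by
        refine ⟨l' ++ [a] ++ u :: ys2, r', ?_⟩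
        rw [hys2]; simp
      have cond2 := ha.2 c2 u b htri2
      have hedge1 := edges_of_triple ha htri1
      have hedge2 := edges_of_triple ha htri2
      constructor
      · rintro ⟨hau, hbu⟩
        by_cases h1 : G c1 u
        · exact cond1.1 ⟨hau, h1⟩
        by_cases h2 : G c2 u
        · exact cond2.1 ⟨h2, hbu⟩
        have huc1 : G u c1 := hedge1.2.resolve_right h1
        have huc2 : G u c2 := by
          rcases hedge2.1 with h | h
          · exact absurd h h2
          · exact h
        -- middle walk
        have hmid : Act G Z (u :: c1 :: (ys1 ++ [u])) := by
          refine ha.infix ⟨l' ++ [a], b :: r', ?_⟩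
          simp
        exact escape hG (ys1 ++ [u]) u c1 c2 u (u :: ys2) hmid huc1
          (by rw [show (u :: c1 :: (ys1 ++ [u]) : List V) = u :: ((c1 :: ys1) ++ [u]) by simp,
                hys2]; simp) huc2
      · intro hncol
        by_cases hau : G a u
        · have hbu : ¬ G b u := fun h => hncol ⟨hau, h⟩
          exact cond2.2 (fun hh => hbu hh.2)
        · exact cond1.2 (fun hh => hau hh.1)
  · -- head
    cases xs with
    | nil =>
      simp only [List.nil_append] at hx ⊢
      simpa using hx
    | cons w ws =>
      rw [List.head?_append_of_ne_nil _ (by simp)] at hx ⊢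
      exact hx
  · -- last
    cases zs with
    | nil =>
      have h1 : (xs ++ u :: ((c1::ys1) ++ u :: ([] : List V))).getLast? = some u := by
        rw [show xs ++ u :: ((c1::ys1) ++ u :: ([] : List V)) = (xs ++ u :: (c1::ys1)) ++ [u] by simp]
        exact List.getLast?_concat
      rw [h1] at hy
      rw [show xs ++ u :: ([] : List V) = xs ++ [u] by simp]
      rw [List.getLast?_concat]
      exact hy
    | cons w ws =>
      rw [show xs ++ u :: ((c1::ys1) ++ u :: (w :: ws)) = (xs ++ u :: (c1::ys1)) ++ (u :: w :: ws) by simp,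
        List.getLast?_append_of_ne_nil _ (by simp)] at hy
      rw [show xs ++ u :: (w :: ws) = xs ++ (u :: w :: ws) by simp,
        List.getLast?_append_of_ne_nil _ (by simp)]
      rw [List.getLast?_cons_cons] at hy ⊢
      exact hy
  · simp; omega

lemma head_ne_last_of_nodup {p : List V} {x y : V} (hnd : p.Nodup)
    (hx : p.head? = some x) (hy : p.getLast? = some y) (hlen : 2 ≤ p.length) : x ≠ y := by
  match p, hlen with
  | a :: b :: t, _ =>
    have hax : a = x := by simpa using hx
    rw [List.getLast?_cons_cons] at hy
    have hymem : y ∈ b :: t := List.mem_of_mem_getLast? (by rw [hy]; rfl)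
    have hnb : a ∉ b :: t := (List.nodup_cons.mp hnd).1
    intro hxy0
    exact hnb (by rw [hax, hxy0]; exact hymem)

lemma conn_nodup {G : V → V → Prop} {Z : Set V} (hG : ∀ x, ¬ Relation.TransGen G x x)
    {x y : V} (h : Conn G Z x y) (hxy : x ≠ y) :
    ∃ p, Act G Z p ∧ p.head? = some x ∧ p.getLast? = some y ∧ 2 ≤ p.length ∧ p.Nodup := by
  suffices H : ∀ n (p : List V), p.length = n → Act G Z p → p.head? = some x →
      p.getLast? = some y → ∃ q, Act G Z q ∧ q.head? = some x ∧ q.getLast? = some y ∧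
        2 ≤ q.length ∧ q.Nodup by
    obtain ⟨p, h1, h2, h3, _⟩ := h
    exact H p.length p rfl h1 h2 h3
  intro n
  induction n using Nat.strong_induction_on with
  | _ n ih =>
    intro p hn h1 h2 h3
    by_cases hnd : p.Nodup
    · exact ⟨p, h1, h2, h3, length_two_of_ends h2 h3 hxy, hnd⟩
    · obtain ⟨q, hq1, hq2, hq3, hq4⟩ := splice hG h1 h2 h3 hnd
      exact ih q.length (by omega) q rfl hq1 hq2 hq3

lemma conn_iff_dConn [Inhabited V] {E : V → V → Prop} {Z : Set V}
    (hE : ∀ x, ¬ Relation.TransGen E x x) {x y : V} :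
    BOSS.dConn E x y Z ↔ (x ≠ y ∧ Conn E Z x y) := by
  constructor
  · rintro ⟨p, hp⟩
    have hxy := head_ne_last_of_nodup hp.2.2.2.1 hp.2.1 hp.2.2.1 hp.1
    exact ⟨hxy, p, act_of_activePath hp, hp.2.1, hp.2.2.1, hp.1⟩
  · rintro ⟨hxy, h⟩
    obtain ⟨p, h1, h2, h3, h4, h5⟩ := conn_nodup hE h hxy
    exact ⟨p, activePath_of_act h1 h2 h3 h5 h4⟩







lemma conn_two {G : V → V → Prop} {Z : Set V} {x y : V} (hxy : sym G x y) (hne : x ≠ y) :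
    Conn G Z x y := by
  refine ⟨[x, y], ⟨List.isChain_pair.mpr hxy, ?_⟩, rfl, rfl, by simp⟩
  intro a c b htri
  have := htri.length_le
  simp at this

lemma conn_symm {G : V → V → Prop} {Z : Set V} {x y : V} (h : Conn G Z x y) :
    Conn G Z y x := by
  obtain ⟨p, h1, h2, h3, h4⟩ := h
  exact ⟨p.reverse, h1.reverse, by rw [List.head?_reverse]; exact h3,
    by rw [List.getLast?_reverse]; exact h2, by simpa using h4⟩

lemma rtg_r {G r : V → V → Prop} (hEr : ∀ a b, G a b → r a b) (htr : Transitive r)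
    {b d : V} (h : Relation.ReflTransGen G b d) : b = d ∨ r b d := by
  induction h with
  | refl => left; rfl
  | tail h1 h2 ih =>
    rcases ih with rfl | hr
    · right; exact hEr _ _ h2
    · right; exact htr hr (hEr _ _ h2)

lemma sep_lemma {G r : V → V → Prop} (hG : ∀ v, ¬ Relation.TransGen G v v)
    (hEr : ∀ a b, G a b → r a b) (htr : Transitive r) (hirr : ∀ a, ¬ r a a)
    {x y : V} (hnadj : ¬ sym G x y) (hyx : r y x) :
    ¬ Conn G ({v | r v x} \ {y}) x y := by
  set Z : Set V := {v | r v x} \ {y} with hZ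
  have hlead : ∀ (rest : List V) (a b : V), Act G Z (a :: b :: rest) → G a b → r x b →
      (a :: b :: rest).getLast? = some y → False := by
    intro rest
    induction rest with
    | nil =>
      intro a b hact hab hxb hlast
      have hby : b = y := by simpa using hlast
      subst hby
      exact hirr x (htr hxb hyx)
    | cons c rest' ih =>
      intro a b hact hab hxb hlast
      by_cases hcb : G c b
      · obtain ⟨d, hd, hdesc⟩ := (hact.2 a b c ⟨[], rest', rfl⟩).1 ⟨hab, hcb⟩
        have hdx : r d x := hd.1
        have hbx : r b x := by
          rcases rtg_r hEr htr hdesc with rfl | hr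
          · exact hdx
          · exact htr hr hdx
        exact hirr x (htr hxb hbx)
      · have hbc : G b c :=
          ((edges_of_triple hact ⟨[], rest', rfl⟩).2).resolve_right hcb
        have hnotin : b ∉ Z := (hact.2 a b c ⟨[], rest', rfl⟩).2 (fun hh => hcb hh.2)
        have hbny : b = y ∨ ¬ r b x := by
          by_cases hb : b = y
          · exact Or.inl hb
          · right; intro hbx; exact hnotin ⟨hbx, hb⟩
        rcases hbny with rfl | hnbx
        · exact hirr x (htr hxb hyx)
        · exact ih b c (hact.infix ⟨[a], [], by simp⟩) hbc (htr hxb (hEr _ _ hbc))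
            (by rwa [List.getLast?_cons_cons] at hlast)
  rintro ⟨p, hact, hhead, hlast, hlen⟩
  match p, hlen with
  | a :: b :: t, _ =>
    have hax : a = x := by simpa using hhead
    have hedge : sym G a b := by
      have := hact.1
      rw [List.Chain', List.isChain_cons_cons] at this
      exact this.1
    rcases hedge with hab | hba
    · exact hlead t a b hact hab (hax ▸ hEr _ _ hab) hlast
    · -- G b a
      cases t with
      | nil =>
        have hby : b = y := by simpa using hlast
        subst hby
        exact hnadj (Or.inr (hax ▸ hba))
      | cons c t' =>
        have hncol : ¬ (G a b ∧ G c b) := fun hh => (asymm hG hba) hh.1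
        have hnotin : b ∉ Z := (hact.2 a b c ⟨[], t', rfl⟩).2 hncol
        have hbx : r b x := hax ▸ hEr _ _ hba
        have hby : b = y := by
          by_contra hb
          exact hnotin ⟨hbx, hb⟩
        subst hby
        exact hnadj (Or.inr (hax ▸ hba))







lemma snoc_inj {s l : List V} {a x : V} (h : s ++ [a] = l ++ [x]) : s = l ∧ a = x := by
  have := List.append_inj h (by have := congrArg List.length h; simpa using this)
  simpa using this

lemma snoc_inj2 {s l : List V} {a x1 x2 : V} (h : s ++ [a] = l ++ [x1, x2]) :
    s = l ++ [x1] ∧ a = x2 := by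
  have h' : s ++ [a] = (l ++ [x1]) ++ [x2] := by rw [h]; simp
  exact snoc_inj h'

section transfer
variable {G H : V → V → Prop} {Z : Set V}

/-- climb along a directed G-chain whose first H-edge agrees -/
lemma climb (hG : ∀ v, ¬ Relation.TransGen G v v) (hH : ∀ v, ¬ Relation.TransGen H v v)
    (hadj : ∀ u v, sym G u v ↔ sym H u v)
    (hUC : ∀ a c b, a ≠ b → ¬ sym G a b → sym G a c → sym G c b →
      ((G a c ∧ G b c) ↔ (H a c ∧ H b c))) :
    ∀ (rest : List V) (u v e : V), G u v → H u v → List.Chain G v rest →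
    (v :: rest).getLast? = some e → e ∈ Z →
    (∃ d ∈ Z, Relation.ReflTransGen H u d) ∨
    (∃ ws, List.Chain G u ws ∧ (u :: ws).getLast? = some e ∧ ws.length ≤ rest.length) := by
  intro rest
  induction rest with
  | nil =>
    intro u v e hGuv hHuv _ hlast hze
    have : v = e := by simpa using hlast
    subst this
    exact Or.inl ⟨v, hze, Relation.ReflTransGen.single hHuv⟩
  | cons w rest' ih =>
    intro u v e hGuv hHuv hch hlast hze
    obtain ⟨hvw, hch'⟩ := List.chain_cons.mp hch
    rw [List.getLast?_cons_cons] at hlast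
    by_cases hHvw : H v w
    · rcases ih v w e hvw hHvw hch' hlast hze with ⟨d, hd, hrtg⟩ | ⟨ws, h1, h2, h3⟩
      · exact Or.inl ⟨d, hd, Relation.ReflTransGen.head hHuv hrtg⟩
      · refine Or.inr ⟨v :: ws, List.chain_cons.mpr ⟨hGuv, h1⟩, ?_, by simp; omega⟩
        cases ws with
        | nil => simp at h2 ⊢; exact h2
        | cons z zs => rw [List.getLast?_cons_cons]; exact h2
    · have hHwv : H w v := ((hadj v w).mp (Or.inl hvw)).resolve_left hHvw
      have hune : u ≠ w := by
        rintro rfl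
        exact hG u (Relation.TransGen.head hGuv (Relation.TransGen.single hvw))
      have hadjuw : sym G u w := by
        by_contra hn
        have := (hUC u v w hune hn (Or.inl hGuv) (Or.inl hvw)).mpr ⟨hHuv, hHwv⟩
        exact asymm hG hvw this.2
      have hGuw : G u w := by
        rcases hadjuw with h | h
        · exact h
        · exact absurd (Relation.TransGen.head hGuv
            (Relation.TransGen.head hvw (Relation.TransGen.single h))) (hG u)
      refine Or.inr ⟨w :: rest', List.chain_cons.mpr ⟨hGuw, hch'⟩, ?_, by simp⟩
      rw [List.getLast?_cons_cons]
      exact hlast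

/-- collider descendant transfer or replacement -/
lemma descOrReplace (hG : ∀ v, ¬ Relation.TransGen G v v) (hH : ∀ v, ¬ Relation.TransGen H v v)
    (hadj : ∀ u v, sym G u v ↔ sym H u v)
    (hUC : ∀ a c b, a ≠ b → ¬ sym G a b → sym G a c → sym G c b →
      ((G a c ∧ G b c) ↔ (H a c ∧ H b c))) :
    ∀ (n : ℕ) (ws : List V) (a b c e : V), ws.length ≤ n → G a c → G b c → H a c → H b c →
    List.Chain G c ws → (c :: ws).getLast? = some e → e ∈ Z →
    (∃ d ∈ Z, Relation.ReflTransGen H c d) ∨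
    (∃ w ws' e', G a w ∧ G b w ∧ List.Chain G w ws' ∧ (w :: ws').getLast? = some e' ∧
      e' ∈ Z ∧ ws'.length < ws.length) := by
  intro n
  induction n with
  | zero =>
    intro ws a b c e hlen _ _ _ _ _ hlast hze
    have hws : ws = [] := List.eq_nil_of_length_eq_zero (by omega)
    subst hws
    have : c = e := by simpa using hlast
    subst this
    exact Or.inl ⟨c, hze, Relation.ReflTransGen.refl⟩
  | succ n ih =>
    intro ws a b c e hlen hac hbc hHac hHbc hch hlast hze
    cases ws with
    | nil =>
      have : c = e := by simpa using hlast
      subst this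
      exact Or.inl ⟨c, hze, Relation.ReflTransGen.refl⟩
    | cons w1 rest =>
      obtain ⟨hcw1, hch'⟩ := List.chain_cons.mp hch
      rw [List.getLast?_cons_cons] at hlast
      by_cases hH1 : H c w1
      · rcases climb hG hH hadj hUC rest c w1 e hcw1 hH1 hch' hlast hze with
          ⟨d, hd, hrtg⟩ | ⟨ws', h1, h2, h3⟩
        · exact Or.inl ⟨d, hd, hrtg⟩
        · rcases ih ws' a b c e (by simp at hlen; omega) hac hbc hHac hHbc h1 h2 hze with
            h | ⟨w, ws'', e', k1, k2, k3, k4, k5, k6⟩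
          · exact Or.inl h
          · exact Or.inr ⟨w, ws'', e', k1, k2, k3, k4, k5, by simp; omega⟩
      · have hHw1c : H w1 c := ((hadj c w1).mp (Or.inl hcw1)).resolve_left hH1
        have hane : a ≠ w1 := by
          rintro rfl
          exact hG a (Relation.TransGen.head hac (Relation.TransGen.single hcw1))
        have hbne : b ≠ w1 := by
          rintro rfl
          exact hG b (Relation.TransGen.head hbc (Relation.TransGen.single hcw1))
        have hadja : sym G a w1 := by
          by_contra hn
          have := (hUC a c w1 hane hn (Or.inl hac) (Or.inl hcw1)).mpr ⟨hHac, hHw1c⟩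
          exact asymm hG hcw1 this.2
        have hadjb : sym G b w1 := by
          by_contra hn
          have := (hUC b c w1 hbne hn (Or.inl hbc) (Or.inl hcw1)).mpr ⟨hHbc, hHw1c⟩
          exact asymm hG hcw1 this.2
        have hGaw1 : G a w1 := by
          rcases hadja with h | h
          · exact h
          · exact absurd (Relation.TransGen.head hac
              (Relation.TransGen.head hcw1 (Relation.TransGen.single h))) (hG a)
        have hGbw1 : G b w1 := by
          rcases hadjb with h | h
          · exact h
          · exact absurd (Relation.TransGen.head hbc
              (Relation.TransGen.head hcw1 (Relation.TransGen.single h))) (hG b)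
        exact Or.inr ⟨w1, rest, e, hGaw1, hGbw1, hch', hlast, hze, by simp⟩

end transfer






section surgery
variable {G : V → V → Prop} {Z : Set V}

lemma act_drop_mid {s t : List V} {a c b : V} (hact : Act G Z (s ++ [a, c, b] ++ t))
    (hab : sym G a b)
    (hja : ∀ (l' : List V) (u : V), s = l' ++ [u] → cond G Z u a b)
    (hjb : ∀ (t' : List V) (v : V), t = v :: t' → cond G Z a b v) :
    Act G Z (s ++ [a, b] ++ t) := by
  constructor
  · have h := hact.1
    rw [List.append_assoc, List.Chain', List.isChain_append] at h ⊢
    refine ⟨h.1, ?_, ?_⟩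
    · have hin := h.2.1
      simp only [List.cons_append, List.nil_append, List.isChain_cons_cons] at hin ⊢
      exact ⟨hab, hin.2.2⟩
    · intro x hx yy hyy
      refine h.2.2 x hx yy ?_
      simp only [List.cons_append, List.head?_cons, Option.mem_def, Option.some.injEq] at hyy ⊢
      exact hyy
  · intro x y z htri
    have hq : s ++ [a, b] ++ t = (s ++ [a]) ++ (b :: t) := by simp
    rw [hq] at htri
    have hp1 : (s ++ [a]) <+: s ++ [a, c, b] ++ t := ⟨[c, b] ++ t, by simp⟩
    have hp2 : (b :: t) <:+ s ++ [a, c, b] ++ t := ⟨s ++ [a, c], by simp⟩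
    rcases infix_triple_append htri with h | h | ⟨l', r', hl, hr⟩ | ⟨l', r', hl, hr⟩
    · exact hact.2 x y z (h.trans hp1.isInfix)
    · exact hact.2 x y z (h.trans hp2.isInfix)
    · obtain ⟨hs, hya⟩ := snoc_inj2 hl
      obtain ⟨hzb, -⟩ := List.cons_eq_cons.mp hr
      subst hya
      rw [← hzb]
      exact hja l' x hs
    · obtain ⟨hs, hxa⟩ := snoc_inj hl
      obtain ⟨hyb, ht⟩ := List.cons_eq_cons.mp hr
      subst hxa
      rw [← hyb]
      exact hjb r' z ht

lemma act_replace_mid {s t : List V} {a c b w : V} (hact : Act G Z (s ++ [a, c, b] ++ t))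
    (haw : sym G a w) (hwb : sym G w b)
    (hcw : cond G Z a w b)
    (hja : ∀ (l' : List V) (u : V), s = l' ++ [u] → cond G Z u a w)
    (hjb : ∀ (t' : List V) (v : V), t = v :: t' → cond G Z w b v) :
    Act G Z (s ++ [a, w, b] ++ t) := by
  constructor
  · have h := hact.1
    rw [List.append_assoc, List.Chain', List.isChain_append] at h ⊢
    refine ⟨h.1, ?_, ?_⟩
    · have hin := h.2.1
      simp only [List.cons_append, List.nil_append, List.isChain_cons_cons] at hin ⊢
      exact ⟨haw, hwb, hin.2.2⟩
    · intro x hx yy hyy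
      refine h.2.2 x hx yy ?_
      simp only [List.cons_append, List.head?_cons, Option.mem_def, Option.some.injEq] at hyy ⊢
      exact hyy
  · intro x y z htri
    have hq : s ++ [a, w, b] ++ t = (s ++ [a]) ++ (w :: b :: t) := by simp
    rw [hq] at htri
    have hp1 : (s ++ [a]) <+: s ++ [a, c, b] ++ t := ⟨[c, b] ++ t, by simp⟩
    have hp2 : (b :: t) <:+ s ++ [a, c, b] ++ t := ⟨s ++ [a, c], by simp⟩
    rcases infix_triple_append htri with h | h | ⟨l', r', hl, hr⟩ | ⟨l', r', hl, hr⟩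
    · exact hact.2 x y z (h.trans hp1.isInfix)
    · -- inside w :: b :: t
      rcases infix_triple_append (l := [w]) (r := b :: t) (by simpa using h) with
        h' | h' | ⟨l'', r'', hl'', hr''⟩ | ⟨l'', r'', hl'', hr''⟩
      · exact absurd h'.length_le (by simp)
      · exact hact.2 x y z (h'.trans hp2.isInfix)
      · exfalso
        have := congrArg List.length hl''
        simp at this
      · have hx : x = w := by
          cases l'' with
          | nil => simpa using hl''.symm
          | cons p q =>
            exfalso
            have := congrArg List.length hl''
            simp at this
        obtain ⟨hyb, ht⟩ := List.cons_eq_cons.mp hr''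
        subst hx
        rw [← hyb]
        exact hjb r'' z ht
    · obtain ⟨hs, hya⟩ := snoc_inj2 hl
      obtain ⟨hzw, -⟩ := List.cons_eq_cons.mp hr
      subst hya
      rw [← hzw]
      exact hja l' x hs
    · obtain ⟨hs, hxa⟩ := snoc_inj hl
      obtain ⟨hyw, ht⟩ := List.cons_eq_cons.mp hr
      obtain ⟨hzb, -⟩ := List.cons_eq_cons.mp ht
      subst hxa
      rw [← hyw, ← hzb]
      exact hcw

lemma ends_drop_mid {s t m1 m2 : List V} (h1 : m1 ≠ []) (h2 : m2 ≠ [])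
    (hh : m1.head? = m2.head?) (hl : m1.getLast? = m2.getLast?) :
    (s ++ m1 ++ t).head? = (s ++ m2 ++ t).head? ∧
      (s ++ m1 ++ t).getLast? = (s ++ m2 ++ t).getLast? := by
  constructor
  · cases s with
    | nil =>
      simp only [List.nil_append]
      rw [List.head?_append_of_ne_nil _ h1, List.head?_append_of_ne_nil _ h2, hh]
    | cons x xs =>
      rw [List.append_assoc, List.append_assoc,
        List.head?_append_of_ne_nil _ (by simp), List.head?_append_of_ne_nil _ (by simp)]
  · cases t with
    | nil =>
      simp only [List.append_nil]
      rw [List.getLast?_append_of_ne_nil _ h1, List.getLast?_append_of_ne_nil _ h2, hl]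
    | cons x xs =>
      rw [List.getLast?_append_of_ne_nil _ (by simp : (x :: xs : List V) ≠ []),
        List.getLast?_append_of_ne_nil _ (by simp : (x :: xs : List V) ≠ [])]

end surgery






section fixes
variable {G H : V → V → Prop} {Z : Set V}

/-- the Act-condition at an explicitly placed triple -/
lemma cond_at {s t : List V} {a c b : V} (hact : Act G Z (s ++ [a, c, b] ++ t)) :
    cond G Z a c b := hact.2 a c b ⟨s, t, rfl⟩

lemma K3fix (hG : ∀ v, ¬ Relation.TransGen G v v) {s t : List V} {a c b : V}
    (hact : Act G Z (s ++ [a, c, b] ++ t)) (hGac : G a c) (hGbc : G b c)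
    (hab : sym G a b) (hcZ : c ∈ Z) : Act G Z (s ++ [a, b] ++ t) := by
  refine act_drop_mid hact hab ?_ ?_
  · rintro l' u rfl
    have holda : cond G Z u a c := hact.2 u a c ⟨l', [b] ++ t, by simp⟩
    constructor
    · rintro ⟨h1, h2⟩
      exact ⟨c, hcZ, Relation.ReflTransGen.single hGac⟩
    · intro _
      exact holda.2 (fun hh => asymm hG hGac hh.2)
  · rintro t' v rfl
    have holdb : cond G Z c b v := by
      refine hact.2 c b v ⟨s ++ [a], t', by simp⟩
    constructor
    · rintro ⟨h1, h2⟩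
      exact ⟨c, hcZ, Relation.ReflTransGen.single hGbc⟩
    · intro _
      exact holdb.2 (fun hh => asymm hG hGbc hh.1)

/-- minimal chain-to-Z length -/
noncomputable def mu (G : V → V → Prop) (Z : Set V) (c : V) : ℕ :=
  sInf {n | ∃ (ws : List V) (e : V), List.Chain G c ws ∧ (c :: ws).getLast? = some e ∧
    e ∈ Z ∧ ws.length = n}

lemma getLast?_eq_getLast' {l : List V} (h : l ≠ []) : l.getLast? = some (l.getLast h) :=
  List.getLast?_eq_getLast h

lemma COLfix (hG : ∀ v, ¬ Relation.TransGen G v v) (hH : ∀ v, ¬ Relation.TransGen H v v)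
    (hadj : ∀ u v, sym G u v ↔ sym H u v)
    (hUC : ∀ a c b, a ≠ b → ¬ sym G a b → sym G a c → sym G c b →
      ((G a c ∧ G b c) ↔ (H a c ∧ H b c)))
    {s t : List V} {a c b : V}
    (hact : Act G Z (s ++ [a, c, b] ++ t)) (hGac : G a c) (hGbc : G b c)
    (hHac : H a c) (hHbc : H b c)
    (hnodesc : ¬ ∃ d ∈ Z, Relation.ReflTransGen H c d) :
    ∃ w, Act G Z (s ++ [a, w, b] ++ t) ∧ mu G Z w < mu G Z c := by
  obtain ⟨d0, hd0Z, hrtg0⟩ := (cond_at hact).1 ⟨hGac, hGbc⟩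
  obtain ⟨l0, hch0, hlast0⟩ := List.exists_isChain_cons_of_relationReflTransGen hrtg0
  have hSne : {n | ∃ (ws : List V) (e : V), List.Chain G c ws ∧ (c :: ws).getLast? = some e ∧
      e ∈ Z ∧ ws.length = n}.Nonempty := by
    refine ⟨l0.length, l0, d0, hch0, ?_, hd0Z, rfl⟩
    rw [getLast?_eq_getLast' (by simp)]
    exact congrArg some hlast0
  obtain ⟨ws, e, hch, hlast, heZ, hlen⟩ := Nat.sInf_mem hSne
  rcases descOrReplace hG hH hadj hUC ws.length ws a b c e (le_refl _) hGac hGbc hHac hHbc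
      hch hlast heZ with h | ⟨w, ws', e', hGaw, hGbw, hch', hlast', he'Z, hlt⟩
  · exact absurd h hnodesc
  · refine ⟨w, ?_, ?_⟩
    · refine act_replace_mid hact (Or.inl hGaw) (Or.inr hGbw) ?_ ?_ ?_
      · constructor
        · rintro ⟨_, _⟩
          refine ⟨e', he'Z, ?_⟩
          refine List.relationReflTransGen_of_exists_isChain_cons ws' hch' ?_
          rw [getLast?_eq_getLast' (by simp : (w :: ws' : List V) ≠ [])] at hlast'
          exact (Option.some.injEq _ _ ▸ hlast')
        · intro hn
          exact absurd ⟨hGaw, hGbw⟩ hn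
      · rintro l' u rfl
        have holda : cond G Z u a c :=
          hact.2 u a c ⟨l', [b] ++ t, by simp⟩
        constructor
        · rintro ⟨_, hwa⟩
          exact absurd hwa (asymm hG hGaw)
        · intro _
          exact holda.2 (fun hh => asymm hG hGac hh.2)
      · rintro t' v rfl
        have holdb : cond G Z c b v := hact.2 c b v ⟨s ++ [a], t', by simp⟩
        constructor
        · rintro ⟨hwb, _⟩
          exact absurd hwb (asymm hG hGbw)
        · intro _
          exact holdb.2 (fun hh => asymm hG hGbc hh.1)
    · have h1 : mu G Z w ≤ ws'.length := by
        apply Nat.sInf_le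
        exact ⟨ws', e', hch', hlast', he'Z, rfl⟩
      have h2 : mu G Z c = ws.length := hlen.symm ▸ rfl
      omega

end fixes






section k2
variable {G H : V → V → Prop} {Z : Set V}

lemma K2fix (hG : ∀ v, ¬ Relation.TransGen G v v) (hH : ∀ v, ¬ Relation.TransGen H v v)
    (hadj : ∀ u v, sym G u v ↔ sym H u v)
    (hUC : ∀ a c b, a ≠ b → ¬ sym G a b → sym G a c → sym G c b →
      ((G a c ∧ G b c) ↔ (H a c ∧ H b c)))
    {s t : List V} {a c b : V}
    (hact : Act G Z (s ++ [a, c, b] ++ t)) (hnd : (s ++ [a, c, b] ++ t).Nodup)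
    (hHac : H a c) (hHbc : H b c) (hGn : ¬ (G a c ∧ G b c)) (hGcb : G c b)
    (hadjab : sym G a b) :
    ∃ q, Act G Z q ∧ q.head? = (s ++ [a, c, b] ++ t).head? ∧
      q.getLast? = (s ++ [a, c, b] ++ t).getLast? ∧
      q.length < (s ++ [a, c, b] ++ t).length := by
  have hnbc : ¬ G b c := asymm hG hGcb
  have hcZ : c ∉ Z := (cond_at hact).2 hGn
  have hendsC := ends_drop_mid (s := s) (t := t) (m1 := [a, c, b]) (m2 := [a, b])
      (by simp) (by simp) (by simp) (by simp)
  have hlenC : (s ++ [a, b] ++ t).length < (s ++ [a, c, b] ++ t).length := by simp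
  rcases hadjab with hGab | hGba
  · -- δ1 : G a b
    have hjb1 : ∀ (t' : List V) (v : V), t = v :: t' → cond G Z a b v := by
      rintro t' v rfl
      have holdb : cond G Z c b v := hact.2 c b v ⟨s ++ [a], t', by simp⟩
      constructor
      · rintro ⟨_, hvb⟩
        exact holdb.1 ⟨hGcb, hvb⟩
      · intro hn
        exact holdb.2 (fun hh => hn ⟨hGab, hh.2⟩)
    rcases List.eq_nil_or_concat s with rfl | ⟨l', u, rfl⟩
    · refine ⟨[] ++ [a, b] ++ t, act_drop_mid hact (Or.inl hGab) ?_ hjb1, hendsC.1.symm, hendsC.2.symm,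
        hlenC⟩
      rintro l' u hlu
      exfalso
      have := congrArg List.length hlu
      simp at this
    · rw [List.concat_eq_append] at *
      have holda : cond G Z u a c := hact.2 u a c ⟨l', [b] ++ t, by simp⟩
      by_cases hcola : G u a ∧ G c a
      · -- TROUBLE1
        obtain ⟨d, hdZ, hdesca⟩ := holda.1 hcola
        have hune : u ≠ c := by
          have hsub : [u, a, c].Nodup := by
            have hinf : [u, a, c] <:+: (l' ++ [u]) ++ [a, c, b] ++ t := ⟨l', [b] ++ t, by simp⟩
            exact hnd.sublist hinf.sublist
          simp at hsub
          exact hsub.1.2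
        have hadjuc : sym G u c := by
          by_contra hn
          have := (hUC u a c hune hn (Or.inl hcola.1) (Or.inr hcola.2)).mp ⟨hcola.1, hcola.2⟩
          exact asymm hH hHac this.2
        have hends3 := ends_drop_mid (s := l') (t := [b] ++ t) (m1 := [u, a, c]) (m2 := [u, c])
          (by simp) (by simp) (by simp) (by simp)
        have heq1 : l' ++ [u, a, c] ++ ([b] ++ t) = (l' ++ [u]) ++ [a, c, b] ++ t := by simp
        have hact3 : Act G Z (l' ++ [u, a, c] ++ ([b] ++ t)) := by rw [heq1]; exact hact
        have hlen3 : (l' ++ [u, c] ++ ([b] ++ t)).length <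
            ((l' ++ [u]) ++ [a, c, b] ++ t).length := by simp
        rcases hadjuc with hGuc | hGcu
        · refine ⟨l' ++ [u, c] ++ ([b] ++ t),
            act_drop_mid hact3 (Or.inl hGuc) ?_ ?_, by rw [← heq1]; exact hends3.1.symm,
            by rw [← heq1]; exact hends3.2.symm, by rw [← heq1] at hlen3 ⊢; exact hlen3⟩
          · rintro l'' u'' rfl
            have holdu : cond G Z u'' u a :=
              hact.2 u'' u a ⟨l'', [c, b] ++ t, by simp⟩
            constructor
            · rintro ⟨_, hcu⟩
              exact absurd hcu (asymm hG hGuc)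
            · intro _
              exact holdu.2 (fun hh => asymm hG hcola.1 hh.2)
          · rintro t'' v hv
            obtain ⟨rfl, -⟩ := List.cons_eq_cons.mp hv
            constructor
            · rintro ⟨_, hbc⟩
              exact absurd hbc hnbc
            · intro _
              exact hcZ
        · refine ⟨l' ++ [u, c] ++ ([b] ++ t),
            act_drop_mid hact3 (Or.inr hGcu) ?_ ?_, by rw [← heq1]; exact hends3.1.symm,
            by rw [← heq1]; exact hends3.2.symm, by rw [← heq1] at hlen3 ⊢; exact hlen3⟩
          · rintro l'' u'' rfl
            have holdu : cond G Z u'' u a :=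
              hact.2 u'' u a ⟨l'', [c, b] ++ t, by simp⟩
            constructor
            · rintro ⟨h1, _⟩
              exact ⟨d, hdZ, Relation.ReflTransGen.head hcola.1 hdesca⟩
            · intro _
              exact holdu.2 (fun hh => asymm hG hcola.1 hh.2)
          · rintro t'' v hv
            obtain ⟨rfl, -⟩ := List.cons_eq_cons.mp hv
            constructor
            · rintro ⟨huc, _⟩
              exact absurd huc (asymm hG hGcu)
            · intro _
              exact hcZ
      · -- no trouble: drop c
        refine ⟨(l' ++ [u]) ++ [a, b] ++ t, act_drop_mid hact (Or.inl hGab) ?_ hjb1,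
          hendsC.1.symm, hendsC.2.symm, hlenC⟩
        rintro l'2 u2 hl2
        obtain ⟨rfl, rfl⟩ := snoc_inj hl2.symm
        constructor
        · rintro ⟨_, hba⟩
          exact absurd hba (asymm hG hGab)
        · intro _
          exact holda.2 hcola
  · -- δ2 : G b a
    have hedgeac : sym G a c := (edges_of_triple hact ⟨s, t, rfl⟩).1
    have hGca : G c a := by
      rcases hedgeac with h | h
      · exact absurd (Relation.TransGen.head h
          (Relation.TransGen.head hGcb (Relation.TransGen.single hGba))) (hG a)
      · exact h
    have hja2 : ∀ (l' : List V) (u : V), s = l' ++ [u] → cond G Z u a b := by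
      rintro l' u rfl
      have holda : cond G Z u a c := hact.2 u a c ⟨l', [b] ++ t, by simp⟩
      constructor
      · rintro ⟨h1, _⟩
        exact holda.1 ⟨h1, hGca⟩
      · intro hn
        exact holda.2 (fun hh => hn ⟨hh.1, hGba⟩)
    cases t with
    | nil =>
      refine ⟨s ++ [a, b] ++ [], act_drop_mid hact (Or.inr hGba) hja2 ?_,
        hendsC.1.symm, hendsC.2.symm, hlenC⟩
      rintro t' v hv
      exact absurd hv (by simp)
    | cons v t' =>
      have holdb : cond G Z c b v := hact.2 c b v ⟨s ++ [a], t', by simp⟩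
      by_cases hGvb : G v b
      · -- TROUBLE2
        obtain ⟨d, hdZ, hdescb⟩ := holdb.1 ⟨hGcb, hGvb⟩
        have hcv : c ≠ v := by
          have hinf : [c, b, v] <:+: s ++ [a, c, b] ++ (v :: t') := ⟨s ++ [a], t', by simp⟩
          have hsub : [c, b, v].Nodup := hnd.sublist hinf.sublist
          simp at hsub
          exact hsub.1.2
        have hadjcv : sym G c v := by
          by_contra hn
          have := (hUC c b v hcv hn (Or.inl hGcb) (Or.inr hGvb)).mp ⟨hGcb, hGvb⟩
          exact asymm hH hHbc this.1
        have hends5 := ends_drop_mid (s := s ++ [a]) (t := t') (m1 := [c, b, v]) (m2 := [c, v])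
          (by simp) (by simp) (by simp) (by simp)
        have heq5 : (s ++ [a]) ++ [c, b, v] ++ t' = s ++ [a, c, b] ++ (v :: t') := by simp
        have hact5 : Act G Z ((s ++ [a]) ++ [c, b, v] ++ t') := by rw [heq5]; exact hact
        have hlen5 : ((s ++ [a]) ++ [c, v] ++ t').length <
            (s ++ [a, c, b] ++ (v :: t')).length := by simp
        have hja5 : ∀ (l'' : List V) (u'' : V), s ++ [a] = l'' ++ [u''] →
            cond G Z u'' c v := by
          rintro l'' u'' hl''
          obtain ⟨rfl, rfl⟩ := snoc_inj hl''.symm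
          constructor
          · rintro ⟨hac2, _⟩
            exact absurd hac2 (asymm hG hGca)
          · intro _
            exact hcZ
        rcases hadjcv with hGcv | hGvc
        · refine ⟨(s ++ [a]) ++ [c, v] ++ t',
            act_drop_mid hact5 (Or.inl hGcv) hja5 ?_, by rw [← heq5]; exact hends5.1.symm,
            by rw [← heq5]; exact hends5.2.symm, by rw [← heq5] at hlen5 ⊢; exact hlen5⟩
          rintro t'' w rfl
          have holdv : cond G Z b v w :=
            hact.2 b v w ⟨s ++ [a, c], t'', by simp⟩
          constructor
          · rintro ⟨_, hwv⟩
            exact ⟨d, hdZ, Relation.ReflTransGen.head hGvb hdescb⟩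
          · intro _
            exact holdv.2 (fun hh => asymm hG hGvb hh.1)
        · refine ⟨(s ++ [a]) ++ [c, v] ++ t',
            act_drop_mid hact5 (Or.inr hGvc) hja5 ?_, by rw [← heq5]; exact hends5.1.symm,
            by rw [← heq5]; exact hends5.2.symm, by rw [← heq5] at hlen5 ⊢; exact hlen5⟩
          rintro t'' w rfl
          have holdv : cond G Z b v w :=
            hact.2 b v w ⟨s ++ [a, c], t'', by simp⟩
          constructor
          · rintro ⟨hcv2, _⟩
            exact absurd hcv2 (asymm hG hGvc)
          · intro _
            exact holdv.2 (fun hh => asymm hG hGvb hh.1)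
      · -- no trouble: drop c
        refine ⟨s ++ [a, b] ++ (v :: t'), act_drop_mid hact (Or.inr hGba) hja2 ?_,
          hendsC.1.symm, hendsC.2.symm, hlenC⟩
        rintro t'2 v2 hv2
        obtain ⟨rfl, rfl⟩ := List.cons_eq_cons.mp hv2
        constructor
        · rintro ⟨hab2, _⟩
          exact absurd hab2 (asymm hG hGba)
        · intro _
          exact holdb.2 (fun hh => hGvb hh.2)

end k2






section driver
variable {G H : V → V → Prop} {Z : Set V}

lemma transfer (hG : ∀ v, ¬ Relation.TransGen G v v) (hH : ∀ v, ¬ Relation.TransGen H v v)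
    (hadj : ∀ u v, sym G u v ↔ sym H u v)
    (hUC : ∀ a c b, a ≠ b → ¬ sym G a b → sym G a c → sym G c b →
      ((G a c ∧ G b c) ↔ (H a c ∧ H b c)))
    {x y : V} (hxy : x ≠ y) (h : Conn G Z x y) : Conn H Z x y := by
  have Main : ∀ L S (p : List V) (xx yy : V), xx ≠ yy → p.length = L →
      (p.map (mu G Z)).sum = S → Act G Z p → p.head? = some xx → p.getLast? = some yy →
      Conn H Z xx yy := by
    intro L
    induction L using Nat.strong_induction_on with
    | _ L ihL =>
      intro S
      induction S using Nat.strong_induction_on with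
      | _ S ihS =>
        intro p xx yy hxy hL hS hact hhead hlast
        by_cases hnd : p.Nodup
        · by_cases hgood : ∀ a c b : V, [a, c, b] <:+: p → cond H Z a c b
          · exact ⟨p, ⟨hact.1.imp (fun {a b} hab => (hadj a b).mp hab), hgood⟩, hhead, hlast,
              length_two_of_ends hhead hlast hxy⟩
          · push_neg at hgood
            obtain ⟨A, C, B, htri, hncond⟩ := hgood
            obtain ⟨s, t, rfl⟩ := htri
            have hcondG := cond_at hact
            have hedges := edges_of_triple hact ⟨s, t, rfl⟩
            have hAB : A ≠ B := by
              have hinf : [A, C, B] <:+: s ++ [A, C, B] ++ t := ⟨s, t, rfl⟩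
              have hsub : [A, C, B].Nodup := hnd.sublist hinf.sublist
              simp at hsub
              exact hsub.1.2
            have hsplit : (H A C ∧ H B C ∧ ¬ ∃ d ∈ Z, Relation.ReflTransGen H C d) ∨
                (¬ (H A C ∧ H B C) ∧ C ∈ Z) := by
              unfold cond at hncond
              by_cases h1 : H A C ∧ H B C
              · left
                refine ⟨h1.1, h1.2, ?_⟩
                intro hd
                exact hncond ⟨fun _ => hd, fun hn => absurd h1 hn⟩
              · right
                refine ⟨h1, ?_⟩
                by_contra hC
                exact hncond ⟨fun hh => absurd hh h1, fun _ => hC⟩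
            rcases hsplit with ⟨hHAC, hHBC, hnodesc⟩ | ⟨hHn, hCZ⟩
            · -- H-collider with no H-descendant in Z
              by_cases hGcol : G A C ∧ G B C
              · -- replacement
                obtain ⟨w, hactw, hmu⟩ :=
                  COLfix hG hH hadj hUC hact hGcol.1 hGcol.2 hHAC hHBC hnodesc
                have hends := ends_drop_mid (s := s) (t := t) (m1 := [A, C, B])
                  (m2 := [A, w, B]) (by simp) (by simp) (by simp) (by simp)
                refine ihS ((s ++ [A, w, B] ++ t).map (mu G Z)).sum ?_ _ xx yy hxy
                  (by rw [← hL]; simp) rfl hactw (hends.1 ▸ hhead) (hends.2 ▸ hlast)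
                rw [← hS]
                simp only [List.map_append, List.sum_append, List.map_cons, List.sum_cons,
                  List.map_nil, List.sum_nil]
                omega
              · -- K2 case
                have hadjAB : sym G A B := by
                  by_contra hn
                  exact hGcol ((hUC A C B hAB hn hedges.1 hedges.2).mpr ⟨hHAC, hHBC⟩)
                by_cases hGCB : G C B
                · obtain ⟨q, hq1, hq2, hq3, hq4⟩ :=
                    K2fix hG hH hadj hUC hact hnd hHAC hHBC hGcol hGCB hadjAB
                  exact ihL q.length (by omega) (q.map (mu G Z)).sum q xx yy hxy rfl rfl hq1
                    (hq2.trans hhead) (hq3.trans hlast)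
                · have hGBC : G B C := hedges.2.resolve_left hGCB
                  have hGCA : G C A := by
                    rcases hedges.1 with h1 | h1
                    · exact absurd (fun hh => hGcol ⟨h1, hGBC⟩) (fun hh => hh trivial)
                    · exact h1
                  have hrevact : Act G Z (t.reverse ++ [B, C, A] ++ s.reverse) := by
                    have := hact.reverse
                    simpa using this
                  have hrevnd : (t.reverse ++ [B, C, A] ++ s.reverse).Nodup := by
                    have : (s ++ [A, C, B] ++ t).reverse.Nodup := by
                      rw [List.nodup_reverse]; exact hnd
                    simpa using this
                  obtain ⟨q, hq1, hq2, hq3, hq4⟩ :=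
                    K2fix hG hH hadj hUC hrevact hrevnd hHBC hHAC
                      (fun hh => hGcol ⟨hh.2, hh.1⟩) hGCA (sym_comm.mp hadjAB)
                  have hrev_ends : (t.reverse ++ [B, C, A] ++ s.reverse).head? = some yy ∧
                      (t.reverse ++ [B, C, A] ++ s.reverse).getLast? = some xx := by
                    constructor
                    · have : (s ++ [A, C, B] ++ t).reverse.head? = some yy := by
                        rw [List.head?_reverse]; exact hlast
                      simpa using this
                    · have : (s ++ [A, C, B] ++ t).reverse.getLast? = some xx := by
                        rw [List.getLast?_reverse]; exact hhead
                      simpa using this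
                  have hqlen : q.length < L := by
                    rw [← hL]
                    have : (t.reverse ++ [B, C, A] ++ s.reverse).length =
                        (s ++ [A, C, B] ++ t).length := by simp; omega
                    omega
                  exact conn_symm (ihL q.length hqlen (q.map (mu G Z)).sum q yy xx hxy.symm
                    rfl rfl hq1 (hq2.trans hrev_ends.1) (hq3.trans hrev_ends.2))
            · -- H-noncollider with C ∈ Z : must be a G-collider, drop C
              have hGcol : G A C ∧ G B C := by
                by_contra hn
                exact absurd hCZ (hcondG.2 hn)
              have hadjAB : sym G A B := by
                by_contra hn
                exact hHn ((hUC A C B hAB hn hedges.1 hedges.2).mp hGcol)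
              have hq := K3fix hG hact hGcol.1 hGcol.2 hadjAB hCZ
              have hends := ends_drop_mid (s := s) (t := t) (m1 := [A, C, B])
                (m2 := [A, B]) (by simp) (by simp) (by simp) (by simp)
              refine ihL (s ++ [A, B] ++ t).length (by rw [← hL]; simp)
                ((s ++ [A, B] ++ t).map (mu G Z)).sum _ xx yy hxy rfl rfl hq
                (hends.1 ▸ hhead) (hends.2 ▸ hlast)
        · obtain ⟨q, hq1, hq2, hq3, hq4⟩ := splice hG hact hhead hlast hnd
          exact ihL q.length (by omega) (q.map (mu G Z)).sum q xx yy hxy rfl rfl hq1 hq2 hq3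
  obtain ⟨p, h1, h2, h3, _⟩ := h
  exact Main p.length (p.map (mu G Z)).sum p x y hxy rfl rfl h1 h2 h3

end driver






lemma transGen_lt {R : V → V → Prop} {f : V → ℕ} (h : ∀ a b, R a b → f a < f b) {a b : V}
    (hab : Relation.TransGen R a b) : f a < f b := by
  induction hab with
  | single h' => exact h _ _ h'
  | tail _ h2 ih => exact lt_trans ih (h _ _ h2)

lemma acyclic_of_lt {R : V → V → Prop} {f : V → ℕ} (h : ∀ a b, R a b → f a < f b) :
    ∀ x, ¬ Relation.TransGen R x x := fun x hx => lt_irrefl _ (transGen_lt h hx)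

/-- Szpilrajn: a strict linear extension of an acyclic relation -/
lemma exists_strict_linear {E : V → V → Prop} (hacyc : ∀ x, ¬ Relation.TransGen E x x) :
    ∃ rs : V → V → Prop, (∀ a b, E a b → rs a b) ∧ Transitive rs ∧ (∀ a, ¬ rs a a) ∧
      (∀ a b, a ≠ b → rs a b ∨ rs b a) := by
  classical
  let r0 : V → V → Prop := Relation.ReflTransGen E
  have hanti : ∀ a b, r0 a b → r0 b a → a = b := by
    intro a b hab hba
    by_contra hne
    rcases Relation.reflTransGen_iff_eq_or_transGen.mp hab with h | h
    · exact hne h.symm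
    rcases Relation.reflTransGen_iff_eq_or_transGen.mp hba with h' | h'
    · exact hne h'
    · exact hacyc a (h.trans h')
  letI : IsPartialOrder V r0 := {
    refl := fun a => Relation.ReflTransGen.refl
    trans := fun a b c => Relation.ReflTransGen.trans
    antisymm := hanti }
  obtain ⟨r, hlin, hsub⟩ := extend_partialOrder r0
  haveI := hlin
  refine ⟨fun a b => r a b ∧ a ≠ b, ?_, ?_, ?_, ?_⟩
  · intro a b hab
    refine ⟨hsub _ _ (Relation.ReflTransGen.single hab), ?_⟩
    rintro rfl
    exact hacyc a (Relation.TransGen.single hab)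
  · rintro a b c ⟨h1, hne1⟩ ⟨h2, hne2⟩
    refine ⟨IsTrans.trans (r := r) _ _ _ h1 h2, ?_⟩
    rintro rfl
    exact hne1 (Std.Antisymm.antisymm (r := r) _ _ h1 h2)
  · rintro a ⟨-, hne⟩
    exact hne rfl
  · intro a b hne
    rcases Std.Total.total (r := r) a b with h | h
    · exact Or.inl ⟨h, hne⟩
    · exact Or.inr ⟨h, hne.symm⟩

section inh
variable [Inhabited V] {E : V → V → Prop} {W : Set V}

/-- two-vertex d-connection for adjacent vertices -/
lemma dconn_adj (hne : (x : V) ≠ y) (hxy : E x y ∨ E y x) : BOSS.dConn E x y W := by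
  refine ⟨[x, y], by simp, by simp, by simp, by simp [hne], ?_, ?_⟩
  · simp [List.Chain', List.isChain_pair]
    exact hxy
  · intro i h1 h2
    simp at h2
    omega

/-- three-vertex d-connection -/
lemma dconn_three {b c a : V} (hne1 : b ≠ c) (hne2 : c ≠ a) (hne3 : b ≠ a)
    (e1 : E b c ∨ E c b) (e2 : E c a ∨ E a c)
    (hcol : E b c ∧ E a c → ∃ d ∈ W, Relation.ReflTransGen E c d)
    (hncol : ¬ (E b c ∧ E a c) → c ∉ W) : BOSS.dConn E b a W := by
  refine ⟨[b, c, a], by simp, by simp, by simp, by simp [hne1, hne2, hne3], ?_, ?_⟩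
  · simp [List.Chain', List.isChain_cons_cons, List.isChain_pair]
    exact ⟨e1, e2⟩
  · intro i h1 h2
    simp at h2
    have hi : i = 1 := by omega
    subst hi
    have hcolAt : BOSS.colliderAt E [b, c, a] 1 ↔ (E b c ∧ E a c) := by
      unfold BOSS.colliderAt
      simp [List.getD]
    constructor
    · intro h
      have := hcol (hcolAt.mp h)
      simpa [List.getD, BOSS.desc] using this
    · intro h
      have := hncol (fun hh => h (hcolAt.mpr hh))
      simpa [List.getD] using this

lemma dSep_of_not_conn (hacyc : ∀ x, ¬ Relation.TransGen E x x) {x y : V}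
    (h : ¬ Conn E W x y) : BOSS.dSep E x y W := by
  intro hd
  exact h ((conn_iff_dConn hacyc).mp hd).2

lemma conn_of_dconn {x y : V} (h : BOSS.dConn E x y W) : Conn E W x y := by
  obtain ⟨p, hp⟩ := h
  exact ⟨p, act_of_activePath hp, hp.2.1, hp.2.2.1, hp.1⟩

end inh


end VPX

open BOSS in
/-- under faithfulness, every permutation's Verma–Pearl edge count is at least
`|edges(G*)|`, with equality iff the constructed DAG is Markov equivalent to `G*`. -/
theorem vp_edge_count_lower_bound
    {V : Type*} [Fintype V] [DecidableEq V] [Inhabited V]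
    (E : V → V → Prop) (hacyc : acyclic E)
    (indep : V → V → Set V → Prop)
    (hfaith : ∀ x y : V, ∀ Z : Set V, indep x y Z ↔ dSep E x y Z)
    (O : List V) (hO : isPermOf O) :
    edgeCount E ≤ vpEdgeCount (fun a b W => ¬ indep a b W) O ∧
      (vpEdgeCount (fun a b W => ¬ indep a b W) O = edgeCount E ↔
        ∀ x y : V, ∀ Z : Set V,
          dSep E x y Z ↔ dSep (vpParent (fun a b W => ¬ indep a b W) O) x y Z) := by
  classical
  obtain ⟨hOnd, hOmem⟩ := hO
  set idx : V → ℕ := fun v => O.idxOf v with hidx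
  have hEacyc : ∀ x, ¬ Relation.TransGen E x x := hacyc
  set E' : V → V → Prop := BOSS.vpParent (fun a b W => ¬ indep a b W) O with hE'def
  have hE'lt : ∀ y x, E' y x → idx y < idx x := by
    intro y x h
    rw [hE'def] at h
    exact h.1.2
  have hE'acyc : ∀ x, ¬ Relation.TransGen E' x x := VPX.acyclic_of_lt hE'lt
  have hidxinj : ∀ {u v : V}, idx u = idx v → u = v := by
    intro u v h
    exact (List.idxOf_inj (hOmem u)).mp h
  have hidxtot : ∀ {u v : V}, u ≠ v → idx u < idx v ∨ idx v < idx u := by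
    intro u v h
    rcases lt_trichotomy (idx u) (idx v) with h1 | h1 | h1
    · exact Or.inl h1
    · exact absurd (hidxinj h1) h
    · exact Or.inr h1
  have hfaith' : ∀ x y : V, ∀ W : Set V, (¬ indep x y W) ↔ BOSS.dConn E x y W := by
    intro x y W
    rw [hfaith x y W]
    exact not_not
  have hsymne : ∀ {u v : V}, VPX.sym E u v → u ≠ v := by
    rintro u v h rfl
    exact VPX.noSelf hEacyc u (h.elim id id)
  have hsymne' : ∀ {u v : V}, VPX.sym E' u v → u ≠ v := by
    rintro u v h rfl
    rcases h with h | h <;> exact lt_irrefl _ (hE'lt _ _ h)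
  have hvpAdj : ∀ u v : V, (E u v ∨ E v u) → idx u < idx v → E' u v := by
    intro u v hsym hlt
    have hne : v ≠ u := (hsymne hsym).symm
    rw [hE'def]
    refine ⟨⟨hOmem u, hlt⟩, ?_⟩
    show ¬ indep v u _
    rw [hfaith' v u _]
    exact VPX.dconn_adj hne (Or.symm hsym)
  -- counting setup
  have himg : ∀ q ∈ {p : V × V | E p.1 p.2},
      (if idx q.1 < idx q.2 then q else (q.2, q.1)) ∈ {p : V × V | E' p.1 p.2} := by
    rintro ⟨u, v⟩ hq
    have hne : u ≠ v := hsymne (Or.inl hq)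
    by_cases hlt : idx u < idx v
    · simp only [if_pos hlt]
      exact hvpAdj u v (Or.inl hq) hlt
    · have hlt2 : idx v < idx u := (hidxtot hne).resolve_left hlt
      simp only [if_neg hlt]
      exact hvpAdj v u (Or.inr hq) hlt2
  have hinj : Set.InjOn (fun q : V × V => if idx q.1 < idx q.2 then q else (q.2, q.1))
      {p : V × V | E p.1 p.2} := by
    rintro ⟨u, v⟩ hq ⟨u', v'⟩ hq' heq
    simp only at heq
    split_ifs at heq with h1 h2 h2
    · exact heq
    · simp only [Prod.mk.injEq] at heq
      obtain ⟨rfl, rfl⟩ := heq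
      exact absurd (Relation.TransGen.head hq (Relation.TransGen.single hq')) (hEacyc u)
    · simp only [Prod.mk.injEq] at heq
      obtain ⟨rfl, rfl⟩ := heq
      exact absurd (Relation.TransGen.head hq (Relation.TransGen.single hq')) (hEacyc _)
    · simp only [Prod.mk.injEq] at heq
      obtain ⟨rfl, rfl⟩ := heq
      rfl
  have himgsub : (fun q : V × V => if idx q.1 < idx q.2 then q else (q.2, q.1)) ''
      {p : V × V | E p.1 p.2} ⊆ {p : V × V | E' p.1 p.2} := by
    rintro q ⟨q0, hq0, rfl⟩
    exact himg q0 hq0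
  have hvpE : vpEdgeCount (fun a b W => ¬ indep a b W) O =
      Set.ncard {p : V × V | E' p.1 p.2} := rfl
  have hedgeE : edgeCount E = Set.ncard {p : V × V | E p.1 p.2} := rfl
  have hineq : edgeCount E ≤ vpEdgeCount (fun a b W => ¬ indep a b W) O := by
    rw [hvpE, hedgeE, ← Set.ncard_image_of_injOn hinj]
    exact Set.ncard_le_ncard himgsub (Set.toFinite _)
  refine ⟨hineq, ?_, ?_⟩
  · -- equality → Markov equivalence
    intro heq
    have hSVeq : (fun q : V × V => if idx q.1 < idx q.2 then q else (q.2, q.1)) ''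
        {p : V × V | E p.1 p.2} = {p : V × V | E' p.1 p.2} := by
      refine Set.eq_of_subset_of_ncard_le himgsub ?_ (Set.toFinite _)
      rw [Set.ncard_image_of_injOn hinj, ← hedgeE, ← hvpE, heq]
    have hadjof : ∀ y x : V, E' y x → (E y x ∨ E x y) := by
      intro y x h
      have hmem : (y, x) ∈ {p : V × V | E' p.1 p.2} := h
      rw [← hSVeq] at hmem
      obtain ⟨⟨u, v⟩, hq, hF⟩ := hmem
      simp only at hF
      split_ifs at hF with hlt
      · simp only [Prod.mk.injEq] at hF
        obtain ⟨rfl, rfl⟩ := hF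
        exact Or.inl hq
      · simp only [Prod.mk.injEq] at hF
        obtain ⟨rfl, rfl⟩ := hF
        exact Or.inr hq
    have hb : ∀ x y : V, ¬ VPX.sym E x y → idx y < idx x →
        dSep E x y (prefixSet O x \ {y}) := by
      intro x y hnadj hlt
      rw [← hfaith]
      by_contra hdep
      refine hnadj ?_
      have hvp : E' y x := by
        rw [hE'def]
        exact ⟨⟨hOmem y, hlt⟩, hdep⟩
      exact Or.symm (hadjof y x hvp)
    have hadj : ∀ u v : V, VPX.sym E u v ↔ VPX.sym E' u v := by
      intro u v
      constructor
      · intro h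
        rcases hidxtot (hsymne h) with hlt | hlt
        · exact Or.inl (hvpAdj u v h hlt)
        · exact Or.inr (hvpAdj v u (Or.symm h) hlt)
      · rintro (h | h)
        · exact hadjof u v h
        · exact Or.symm (hadjof v u h)
    have hUC : ∀ a c b : V, a ≠ b → ¬ VPX.sym E a b → VPX.sym E a c → VPX.sym E c b →
        ((E a c ∧ E b c) ↔ (E' a c ∧ E' b c)) := by
      intro a c b hab hnadj hac hcb
      have hE'iff : ∀ u w : V, VPX.sym E u w → (E' u w ↔ idx u < idx w) := by
        intro u w hsym
        exact ⟨fun h => hE'lt u w h, fun hlt => hvpAdj u w hsym hlt⟩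
      rw [hE'iff a c hac, hE'iff b c (VPX.sym_comm.mp hcb)]
      have key : ∀ a b : V, a ≠ b → ¬ VPX.sym E a b → VPX.sym E a c → VPX.sym E c b →
          idx a < idx b → ((E a c ∧ E b c) ↔ (idx a < idx c ∧ idx b < idx c)) := by
        intro a b hab hnadj hac hcb hlt
        have hbc_ne : b ≠ c := (hsymne hcb).symm
        have hca_ne : c ≠ a := (hsymne hac).symm
        have hba_ne : b ≠ a := hab.symm
        have hsep : dSep E b a (prefixSet O b \ {a}) :=
          hb b a (fun h => hnadj (VPX.sym_comm.mp h)) hlt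
        have he1 : E b c ∨ E c b := Or.symm hcb
        have he2 : E c a ∨ E a c := Or.symm hac
        constructor
        · rintro ⟨hEac, hEbc⟩
          have hbc : idx b < idx c := by
            by_contra hn
            have hcb' : idx c < idx b := (hidxtot hbc_ne.symm).resolve_right hn
            have hcZ : c ∈ prefixSet O b \ {a} := ⟨⟨hOmem c, hcb'⟩, hca_ne⟩
            exact hsep (VPX.dconn_three hbc_ne hca_ne hba_ne he1 he2
              (fun _ => ⟨c, hcZ, Relation.ReflTransGen.refl⟩)
              (fun hn' => absurd ⟨hEbc, hEac⟩ hn'))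
          exact ⟨lt_trans hlt hbc, hbc⟩
        · rintro ⟨hiac, hibc⟩
          by_contra hncolG
          have hcnotZ : c ∉ prefixSet O b \ {a} := by
            rintro ⟨⟨-, hlt2⟩, -⟩
            exact lt_asymm hibc hlt2
          exact hsep (VPX.dconn_three hbc_ne hca_ne hba_ne he1 he2
            (fun hh => absurd ⟨hh.2, hh.1⟩ hncolG)
            (fun _ => hcnotZ))
      rcases hidxtot hab with hlt | hlt
      · exact key a b hab hnadj hac hcb hlt
      · have h2 := key b a hab.symm (fun h => hnadj (VPX.sym_comm.mp h))
          (VPX.sym_comm.mp hcb) (VPX.sym_comm.mp hac) hlt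
        constructor
        · rintro ⟨x1, x2⟩
          have := h2.mp ⟨x2, x1⟩
          exact ⟨this.2, this.1⟩
        · rintro ⟨x1, x2⟩
          have := h2.mpr ⟨x2, x1⟩
          exact ⟨this.2, this.1⟩
    have hUC' : ∀ a c b : V, a ≠ b → ¬ VPX.sym E' a b → VPX.sym E' a c → VPX.sym E' c b →
        ((E' a c ∧ E' b c) ↔ (E a c ∧ E b c)) := by
      intro a c b h1 h2 h3 h4
      exact (hUC a c b h1 (fun hh => h2 ((hadj a b).mp hh)) ((hadj a c).mpr h3)
        ((hadj c b).mpr h4)).symm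
    intro x y W
    constructor
    · intro hsep hdconn'
      apply hsep
      obtain ⟨hne, hconn'⟩ := (VPX.conn_iff_dConn hE'acyc).mp hdconn'
      have hconn := VPX.transfer hE'acyc hEacyc (fun u v => (hadj u v).symm) hUC' hne hconn'
      exact (VPX.conn_iff_dConn hEacyc).mpr ⟨hne, hconn⟩
    · intro hsep hdconn
      apply hsep
      obtain ⟨hne, hconn⟩ := (VPX.conn_iff_dConn hEacyc).mp hdconn
      have hconn' := VPX.transfer hEacyc hE'acyc hadj hUC hne hconn
      exact (VPX.conn_iff_dConn hE'acyc).mpr ⟨hne, hconn'⟩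
  · -- Markov equivalence → equality
    intro hequiv
    obtain ⟨rs, hrsE, hrstr, hrsirr, hrstot⟩ := VPX.exists_strict_linear hEacyc
    have hadjE'E : ∀ y x : V, E' y x → VPX.sym E y x := by
      intro y x h
      by_contra hnadj
      have hne : y ≠ x := fun hh => by
        have := hE'lt y x h
        rw [hh] at this
        omega
      rcases hrstot y x hne with hlt | hlt
      · have hnc := VPX.sep_lemma hEacyc hrsE hrstr hrsirr
          (fun hh => hnadj (VPX.sym_comm.mp hh)) hlt
        have hdsepE : dSep E x y ({v | rs v x} \ {y}) :=
          VPX.dSep_of_not_conn hEacyc hnc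
        have hdsepE' := (hequiv x y ({v | rs v x} \ {y})).mp hdsepE
        exact hdsepE' (VPX.dconn_adj hne.symm (Or.inr h))
      · have hnc := VPX.sep_lemma hEacyc hrsE hrstr hrsirr
          (fun hh => hnadj hh) hlt
        have hdsepE : dSep E y x ({v | rs v y} \ {x}) :=
          VPX.dSep_of_not_conn hEacyc hnc
        have hdsepE' := (hequiv y x ({v | rs v y} \ {x})).mp hdsepE
        exact hdsepE' (VPX.dconn_adj hne (Or.inl h))
    have hSVsub : {p : V × V | E' p.1 p.2} ⊆
        (fun q : V × V => if idx q.1 < idx q.2 then q else (q.2, q.1)) ''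
          {p : V × V | E p.1 p.2} := by
      rintro ⟨y, x⟩ h
      have hsym := hadjE'E y x h
      have hlt := hE'lt y x h
      rcases hsym with hE1 | hE1
      · exact ⟨(y, x), hE1, by simp only [if_pos hlt]⟩
      · refine ⟨(x, y), hE1, ?_⟩
        have hn : ¬ idx x < idx y := by omega
        simp only [if_neg hn]
    have heqset : (fun q : V × V => if idx q.1 < idx q.2 then q else (q.2, q.1)) ''
        {p : V × V | E p.1 p.2} = {p : V × V | E' p.1 p.2} :=
      Set.Subset.antisymm himgsub hSVsub
    rw [hvpE, hedgeE, ← heqset, Set.ncard_image_of_injOn hinj]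
end

section
/- If G is a DAG and X, Y, Z are three vertices with Y and Z both parents of X and Y, Z non-adjacent in G (an unshielded collider Y→X←Z), then in any permutation O in which X precedes Y or X precedes Z, the Verma–Pearl DAG dag(O) built from the d-separation oracle of G makes Y and Z adjacent (a shield is added). -/
open BOSS in
lemma collider_dConn_aux {V : Type*} [Inhabited V] (E : V → V → Prop) (Z : Set V)
    (w u x : V) (hwx : E w x) (hux : E u x) (hxZ : x ∈ Z)
    (hwne : w ≠ x) (hune : u ≠ x) (hwu : w ≠ u) : dConn E w u Z := by
  refine ⟨[w, x, u], ?_, ?_, ?_, ?_, ?_, ?_⟩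
  · simp
  · simp
  · simp
  · simp [hwne, hwu, Ne.symm hune]
  · exact List.isChain_cons_cons.mpr ⟨Or.inl hwx, List.isChain_cons_cons.mpr ⟨Or.inr hux, List.isChain_singleton _⟩⟩
  · intro i hi hi'
    simp only [List.length_cons, List.length_nil] at hi'
    have : i = 1 := by omega
    subst this
    constructor
    · intro _
      exact ⟨x, hxZ, Relation.ReflTransGen.refl⟩
    · intro hc
      exact absurd ⟨by simpa using hwx, by simpa using hux⟩ hc

open BOSS in
/-- for an unshielded collider y→x←z in `G`, any permutation placing `x` before
`y` or before `z` forces `y` and `z` to be adjacent in the Verma–Pearl DAG (a shield is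
added). -/
theorem unshielded_collider_forces_shield
    {V : Type*} [Fintype V] [DecidableEq V] [Inhabited V]
    (E : V → V → Prop) (hacyc : acyclic E)
    (x y z : V) (hyx : E y x) (hzx : E z x)
    (hyz : ¬ E y z) (hzy : ¬ E z y) (hne : y ≠ z)
    (O : List V) (hO : isPermOf O)
    (hpos : O.idxOf x < O.idxOf y ∨ O.idxOf x < O.idxOf z) :
    vpParent (dConn E) O y z ∨ vpParent (dConn E) O z y := by
  obtain ⟨hnd, hmem⟩ := hO
  have hyx' : y ≠ x := fun h => hacyc x (Relation.TransGen.single (h ▸ hyx))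
  have hzx' : z ≠ x := fun h => hacyc x (Relation.TransGen.single (h ▸ hzx))
  rcases lt_trichotomy (O.idxOf y) (O.idxOf z) with h | h | h
  · left
    refine ⟨⟨hmem y, h⟩, ?_⟩
    have hxz : O.idxOf x < O.idxOf z := hpos.elim (fun h' => h'.trans h) id
    exact collider_dConn_aux E _ z y x hzx hyx
      ⟨⟨hmem x, hxz⟩, fun hx => hyx' (Set.mem_singleton_iff.mp hx).symm⟩
      hzx' hyx' hne.symm
  · exact absurd ((List.idxOf_inj (hmem y)).mp h) hne
  · right
    refine ⟨⟨hmem z, h⟩, ?_⟩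
    have hxy : O.idxOf x < O.idxOf y := hpos.elim id (fun h' => h'.trans h)
    exact collider_dConn_aux E _ y z x hyx hzx
      ⟨⟨hmem x, hxy⟩, fun hx => hzx' (Set.mem_singleton_iff.mp hx).symm⟩
      hyx' hzx' hne
end
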